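/- In the avg-AL reduction instance built from a simple graph H = (V, E) and an integer k ≥ 3 with |V| + |E| > k and k+1 divisible by 3, under avg-AL utilities with fixed weight w ≥ n^4, the following holds: if a coalition C blocks the coalition structure Γ, then every player of C is a vertex player v', an edge player e', an incidence player b_{v,e}, or the mid player of a vertex gadget P_v; in particular, C contains no base-clique players of any gadget and no mid players of edge or incidence gadgets. -/

import Mathlib

open Finset
open scoped Classical

section AHGDefs

variable {N : Type*} [Fintype N] [DecidableEq N]

/-- The set of friends of player `i` inside coalition `C`. -/
noncomputable def friendsIn (G : SimpleGraph N) (C : Finset N) (i : N) : Finset N :=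
  C.filter fun j => G.Adj i j

/-- The friend-oriented valuation of coalition `C` by player `i`:
`val_i(C) = n·|F_i ∩ C| − |E_i ∩ C|`. -/
noncomputable def fval (G : SimpleGraph N) (C : Finset N) (i : N) : ℤ :=
  (Fintype.card N : ℤ) * ((friendsIn G C i).card : ℤ)
    - ((C.filter fun j => ¬ G.Adj i j ∧ j ≠ i).card : ℤ)

/-- Average-based equal-treatment utility. -/
noncomputable def utilAvgEQ (G : SimpleGraph N) (C : Finset N) (i : N) : ℚ :=
  (∑ c ∈ insert i (friendsIn G C i), (fval G C c : ℚ)) /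
    ((insert i (friendsIn G C i)).card : ℚ)

/-- Average-based altruistic-treatment utility with weight `w`. -/
noncomputable def utilAvgAL (G : SimpleGraph N) (w : ℚ) (C : Finset N) (i : N) : ℚ :=
  (fval G C i : ℚ) +
    w * (if (friendsIn G C i).Nonempty then
          (∑ c ∈ friendsIn G C i, (fval G C c : ℚ)) / ((friendsIn G C i).card : ℚ)
         else 0)

/-- Min-based equal-treatment utility. -/
noncomputable def utilMinEQ (G : SimpleGraph N) (C : Finset N) (i : N) : ℤ :=
  (insert i (friendsIn G C i)).inf' (insert_nonempty _ _) (fval G C)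

/-- Min-based altruistic-treatment utility with weight `w`. -/
noncomputable def utilMinAL (G : SimpleGraph N) (w : ℤ) (C : Finset N) (i : N) : ℤ :=
  fval G C i +
    w * (if h : (friendsIn G C i).Nonempty then (friendsIn G C i).inf' h (fval G C) else 0)

/-- A coalition structure (partition of the players), given as the map sending
each player to its coalition. -/
structure CoalitionStructure (N : Type*) [Fintype N] [DecidableEq N] where
  part : N → Finset N
  mem_part : ∀ i, i ∈ part i
  part_eq : ∀ i j, j ∈ part i → part j = part i

/-- A (nonempty) coalition `C` blocks the coalition structure `Γ`. -/
def Blocks {α : Type*} [LT α] (util : Finset N → N → α) (Γ : CoalitionStructure N)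
    (C : Finset N) : Prop :=
  C.Nonempty ∧ ∀ i ∈ C, util (Γ.part i) i < util C i

/-- Core stability: no nonempty coalition blocks `Γ`. -/
def CoreStable {α : Type*} [LT α] (util : Finset N → N → α)
    (Γ : CoalitionStructure N) : Prop :=
  ¬ ∃ C : Finset N, Blocks util Γ C

/-- The base clique of a pinched `(d,k')`-dome gadget on `P` with top player `top`
and (unique) mid player `mid`. -/
noncomputable def pdomeBase (P : Finset N) (top mid : N) : Finset N :=
  P \ {top, mid}

/-- `P` carries a pinched `(d,k')`-dome gadget of the graph `G`, with top player `top`,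
the unique mid player `mid` (obtained by identifying the `d` mid players) and fringe
players `fringe i`. -/
structure IsPinchedDomeGadget (G : SimpleGraph N) (d k' : ℕ) (P : Finset N) (top mid : N)
    (fringe : Fin d → N) : Prop where
  card_eq : P.card = k' - d + 1
  top_mem : top ∈ P
  mid_mem : mid ∈ P
  mid_ne_top : mid ≠ top
  fringe_mem : ∀ i, fringe i ∈ pdomeBase P top mid
  fringe_inj : Function.Injective fringe
  adj_iff : ∀ x ∈ P, ∀ y ∈ P, (G.Adj x y ↔
    ((x = top ∧ y = mid) ∨ (y = top ∧ x = mid) ∨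
     (x ∈ pdomeBase P top mid ∧ y ∈ pdomeBase P top mid ∧ x ≠ y) ∨
     (x = mid ∧ ∃ i, y = fringe i) ∨ (y = mid ∧ ∃ i, x = fringe i)))

/-- `P` carries a pinched `(d,k')`-dome gadget with top player `top`. -/
def HasPinchedDomeGadget (G : SimpleGraph N) (d k' : ℕ) (P : Finset N) (top : N) : Prop :=
  ∃ (mid : N) (fringe : Fin d → N), IsPinchedDomeGadget G d k' P top mid fringe

/-- The gadget size `k' = k + 3·(k choose 2) + 1` of the average-based reductions. -/
def avgK' (k : ℕ) : ℕ := k + 3 * Nat.choose k 2 + 1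

variable {V : Type*} [Fintype V] [DecidableEq V]

/-- `Γ` is the coalition structure of the average-based reduction instances: its
coalitions are exactly the gadget player sets. -/
def IsAvgGamma (H : SimpleGraph V) (Pv : V → Finset N) (Pe : Sym2 V → Finset N)
    (Pve : V → Sym2 V → Finset N) (Γ : CoalitionStructure N) : Prop :=
  (∀ v : V, ∀ i ∈ Pv v, Γ.part i = Pv v) ∧
  (∀ e ∈ H.edgeSet, ∀ i ∈ Pe e, Γ.part i = Pe e) ∧
  (∀ (v : V), ∀ e ∈ H.edgeSet, v ∈ e → ∀ i ∈ Pve v e, Γ.part i = Pve v e)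

/-- The avg-AL reduction instance built from the graph `H` and `k ≥ 3` with `3 ∣ k+1`:
`G` is the constructed network of friends; `Pv v` and `Pe e` carry pinched
`(2,k')`-dome gadgets with top players `vp v` and `ep e`, and `Pve v e` a pinched
`((k+1)/3,k')`-dome gadget with top player `bp v e`. For each edge `e = xy` of `H`,
the player `bp x e` is further adjacent to `vp x`, to `ep e`, and to `bp y e`,
and there are no other edges. -/
structure AvgALReduction (H : SimpleGraph V) (k : ℕ) (G : SimpleGraph N)
    (Pv : V → Finset N) (Pe : Sym2 V → Finset N) (Pve : V → Sym2 V → Finset N)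
    (vp : V → N) (ep : Sym2 V → N) (bp : V → Sym2 V → N) : Prop where
  pdome_v : ∀ v : V, HasPinchedDomeGadget G 2 (avgK' k) (Pv v) (vp v)
  pdome_e : ∀ e ∈ H.edgeSet, HasPinchedDomeGadget G 2 (avgK' k) (Pe e) (ep e)
  pdome_ve : ∀ (v : V), ∀ e ∈ H.edgeSet, v ∈ e →
    HasPinchedDomeGadget G ((k + 1) / 3) (avgK' k) (Pve v e) (bp v e)
  disj_vv : ∀ v w : V, v ≠ w → Disjoint (Pv v) (Pv w)
  disj_ee : ∀ e ∈ H.edgeSet, ∀ f ∈ H.edgeSet, e ≠ f → Disjoint (Pe e) (Pe f)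
  disj_bb : ∀ (v : V), ∀ e ∈ H.edgeSet, v ∈ e → ∀ (w : V), ∀ f ∈ H.edgeSet, w ∈ f →
    (v, e) ≠ (w, f) → Disjoint (Pve v e) (Pve w f)
  disj_v_e : ∀ (v : V), ∀ e ∈ H.edgeSet, Disjoint (Pv v) (Pe e)
  disj_v_b : ∀ (v w : V), ∀ f ∈ H.edgeSet, w ∈ f → Disjoint (Pv v) (Pve w f)
  disj_e_b : ∀ e ∈ H.edgeSet, ∀ (w : V), ∀ f ∈ H.edgeSet, w ∈ f →
    Disjoint (Pe e) (Pve w f)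
  cover : ∀ x : N, (∃ v : V, x ∈ Pv v) ∨ (∃ e ∈ H.edgeSet, x ∈ Pe e) ∨
    (∃ (v : V), ∃ e ∈ H.edgeSet, v ∈ e ∧ x ∈ Pve v e)
  adj_bv : ∀ (v : V), ∀ e ∈ H.edgeSet, v ∈ e → G.Adj (bp v e) (vp v)
  adj_be : ∀ (v : V), ∀ e ∈ H.edgeSet, v ∈ e → G.Adj (bp v e) (ep e)
  adj_bb : ∀ x y : V, H.Adj x y → G.Adj (bp x s(x, y)) (bp y s(x, y))
  adj_cases : ∀ x y : N, G.Adj x y →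
    (∃ v : V, x ∈ Pv v ∧ y ∈ Pv v) ∨
    (∃ e ∈ H.edgeSet, x ∈ Pe e ∧ y ∈ Pe e) ∨
    (∃ (v : V), ∃ e ∈ H.edgeSet, v ∈ e ∧ x ∈ Pve v e ∧ y ∈ Pve v e) ∨
    (∃ (v : V), ∃ e ∈ H.edgeSet, v ∈ e ∧
      ((x = bp v e ∧ y = vp v) ∨ (y = bp v e ∧ x = vp v))) ∨
    (∃ (v : V), ∃ e ∈ H.edgeSet, v ∈ e ∧
      ((x = bp v e ∧ y = ep e) ∨ (y = bp v e ∧ x = ep e))) ∨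
    (∃ a b : V, H.Adj a b ∧
      ((x = bp a s(a, b) ∧ y = bp b s(a, b)) ∨ (y = bp a s(a, b) ∧ x = bp b s(a, b))))
end AHGDefs

section Helpers

set_option linter.unusedSectionVars false

variable {N : Type*} [Fintype N] [DecidableEq N] (G : SimpleGraph N)

lemma friendsIn_subset (C : Finset N) (i : N) : friendsIn G C i ⊆ C :=
  Finset.filter_subset _ _

lemma friendsIn_mono {C D : Finset N} (h : C ⊆ D) (i : N) :
    friendsIn G C i ⊆ friendsIn G D i :=
  Finset.filter_subset_filter _ h

lemma fval_le_card (C : Finset N) (i : N) :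
    fval G C i ≤ (Fintype.card N : ℤ) * ((friendsIn G C i).card : ℤ) := by
  unfold fval
  have : (0:ℤ) ≤ ((C.filter fun j => ¬ G.Adj i j ∧ j ≠ i).card : ℤ) := by positivity
  linarith

lemma fval_le_sq (C : Finset N) (i : N) :
    fval G C i ≤ (Fintype.card N : ℤ) * (Fintype.card N : ℤ) := by
  refine (fval_le_card G C i).trans ?_
  have h1 : (friendsIn G C i).card ≤ Fintype.card N := Finset.card_le_card (Finset.subset_univ _)
  have h2 : (0:ℤ) ≤ (Fintype.card N : ℤ) := by positivity
  exact mul_le_mul_of_nonneg_left (by exact_mod_cast h1) h2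

lemma neg_le_fval (C : Finset N) (i : N) : -(Fintype.card N : ℤ) ≤ fval G C i := by
  unfold fval
  have h1 : ((C.filter fun j => ¬ G.Adj i j ∧ j ≠ i).card : ℤ) ≤ (Fintype.card N : ℤ) := by
    exact_mod_cast Finset.card_le_card (Finset.subset_univ _)
  have h2 : (0:ℤ) ≤ (Fintype.card N : ℤ) * ((friendsIn G C i).card : ℤ) := by positivity
  linarith

/-- S1: if every `C`-friend value is at most `A` while the `Γ`-average is at least
`A + 1`, utility cannot improve (for large `w`). -/
lemma util_le_S1 (w : ℚ) (C P : Finset N) (i : N) (A : ℚ) (hA : 0 ≤ A)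
    (hwpos : ((Fintype.card N : ℚ))^2 + (Fintype.card N : ℚ) ≤ w)
    (hCav : ∀ c ∈ friendsIn G C i, (fval G C c : ℚ) ≤ A)
    (hPne : (friendsIn G P i).Nonempty)
    (hPav : ((friendsIn G P i).card : ℚ) * (A + 1) ≤ ∑ c ∈ friendsIn G P i, (fval G P c : ℚ)) :
    utilAvgAL G w C i ≤ utilAvgAL G w P i := by
  have hn1 : (1:ℚ) ≤ (Fintype.card N : ℚ) := by
    have : 0 < Fintype.card N := Fintype.card_pos_iff.mpr ⟨i⟩
    exact_mod_cast this
  have hw0 : (0:ℚ) ≤ w := le_trans (by positivity) hwpos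
  have hPcard : (0:ℚ) < ((friendsIn G P i).card : ℚ) := by
    exact_mod_cast Finset.card_pos.mpr hPne
  have hPavg : A + 1 ≤ (∑ c ∈ friendsIn G P i, (fval G P c : ℚ)) / ((friendsIn G P i).card : ℚ) := by
    rw [le_div_iff₀ hPcard]
    linarith [hPav]
  have hvalP : -(Fintype.card N : ℚ) ≤ (fval G P i : ℚ) := by
    exact_mod_cast neg_le_fval G P i
  have hvalC : (fval G C i : ℚ) ≤ (Fintype.card N : ℚ) * (Fintype.card N : ℚ) := by
    exact_mod_cast fval_le_sq G C i
  unfold utilAvgAL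
  rw [if_pos hPne]
  by_cases hCne : (friendsIn G C i).Nonempty
  · rw [if_pos hCne]
    have hCcard : (0:ℚ) < ((friendsIn G C i).card : ℚ) := by
      exact_mod_cast Finset.card_pos.mpr hCne
    have hCavg : (∑ c ∈ friendsIn G C i, (fval G C c : ℚ)) / ((friendsIn G C i).card : ℚ) ≤ A := by
      rw [div_le_iff₀ hCcard]
      calc ∑ c ∈ friendsIn G C i, (fval G C c : ℚ) ≤ ∑ _c ∈ friendsIn G C i, A :=
            Finset.sum_le_sum hCav
        _ = ((friendsIn G C i).card : ℚ) * A := by rw [Finset.sum_const, nsmul_eq_mul]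
        _ = A * ((friendsIn G C i).card : ℚ) := mul_comm _ _
    have h1 : w * ((∑ c ∈ friendsIn G C i, (fval G C c : ℚ)) / ((friendsIn G C i).card : ℚ))
        ≤ w * A := mul_le_mul_of_nonneg_left hCavg hw0
    have h2 : w * (A + 1) ≤ w * ((∑ c ∈ friendsIn G P i, (fval G P c : ℚ)) / ((friendsIn G P i).card : ℚ)) :=
      mul_le_mul_of_nonneg_left hPavg hw0
    nlinarith [sq_nonneg ((Fintype.card N : ℚ))]
  · rw [if_neg hCne]
    have h2 : w * (A + 1) ≤ w * ((∑ c ∈ friendsIn G P i, (fval G P c : ℚ)) / ((friendsIn G P i).card : ℚ)) :=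
      mul_le_mul_of_nonneg_left hPavg hw0
    have h3 : w ≤ w * (A + 1) := by nlinarith
    nlinarith

/-- S2: same friend set, pointwise-dominated sum, dominated own value. -/
lemma util_le_S2 (w : ℚ) (hw0 : 0 ≤ w) (C P : Finset N) (i : N)
    (hfe : friendsIn G C i = friendsIn G P i)
    (hne : (friendsIn G P i).Nonempty)
    (hsum : ∑ c ∈ friendsIn G P i, (fval G C c : ℚ) ≤ ∑ c ∈ friendsIn G P i, (fval G P c : ℚ))
    (hval : fval G C i ≤ fval G P i) :
    utilAvgAL G w C i ≤ utilAvgAL G w P i := by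
  have hPcard : (0:ℚ) < ((friendsIn G P i).card : ℚ) := by
    exact_mod_cast Finset.card_pos.mpr hne
  unfold utilAvgAL
  rw [hfe, if_pos hne, if_pos hne]
  have h1 : (∑ c ∈ friendsIn G P i, (fval G C c : ℚ)) / ((friendsIn G P i).card : ℚ)
      ≤ (∑ c ∈ friendsIn G P i, (fval G P c : ℚ)) / ((friendsIn G P i).card : ℚ) :=
    by gcongr
  have hv : (fval G C i : ℚ) ≤ (fval G P i : ℚ) := by exact_mod_cast hval
  nlinarith [mul_le_mul_of_nonneg_left h1 hw0]

/-- S1': same friend set, sum drops by at least the cardinality (average drops by ≥ 1). -/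
lemma util_le_S1' (w : ℚ) (C P : Finset N) (i : N)
    (hwpos : ((Fintype.card N : ℚ))^2 + (Fintype.card N : ℚ) ≤ w)
    (hfe : friendsIn G C i = friendsIn G P i)
    (hne : (friendsIn G P i).Nonempty)
    (hsum : ∑ c ∈ friendsIn G P i, (fval G C c : ℚ) ≤
      (∑ c ∈ friendsIn G P i, (fval G P c : ℚ)) - ((friendsIn G P i).card : ℚ)) :
    utilAvgAL G w C i ≤ utilAvgAL G w P i := by
  have hn1 : (1:ℚ) ≤ (Fintype.card N : ℚ) := by
    have : 0 < Fintype.card N := Fintype.card_pos_iff.mpr ⟨i⟩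
    exact_mod_cast this
  have hw0 : (0:ℚ) ≤ w := le_trans (by positivity) hwpos
  have hPcard : (0:ℚ) < ((friendsIn G P i).card : ℚ) := by
    exact_mod_cast Finset.card_pos.mpr hne
  have hvalP : -(Fintype.card N : ℚ) ≤ (fval G P i : ℚ) := by
    exact_mod_cast neg_le_fval G P i
  have hvalC : (fval G C i : ℚ) ≤ (Fintype.card N : ℚ) * (Fintype.card N : ℚ) := by
    exact_mod_cast fval_le_sq G C i
  unfold utilAvgAL
  rw [hfe, if_pos hne, if_pos hne]
  have h1 : (∑ c ∈ friendsIn G P i, (fval G C c : ℚ)) / ((friendsIn G P i).card : ℚ)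
      ≤ (∑ c ∈ friendsIn G P i, (fval G P c : ℚ)) / ((friendsIn G P i).card : ℚ) - 1 := by
    rw [div_le_iff₀ hPcard] at *
    rw [sub_mul, div_mul_cancel₀ _ (ne_of_gt hPcard)]
    linarith
  nlinarith [mul_le_mul_of_nonneg_left h1 hw0]

end Helpers

section Gadget

set_option linter.unusedSectionVars false

variable {N : Type*} [Fintype N] [DecidableEq N] {G : SimpleGraph N}
  {d k' : ℕ} {P : Finset N} {top mid : N} {fringe : Fin d → N}

lemma mem_pdomeBase {c : N} : c ∈ pdomeBase P top mid ↔ c ∈ P ∧ c ≠ top ∧ c ≠ mid := by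
  simp [pdomeBase, and_assoc]

namespace IsPinchedDomeGadget

variable (g : IsPinchedDomeGadget G d k' P top mid fringe)

/-- The fringe players as a finset. -/
noncomputable def FR (_g : IsPinchedDomeGadget G d k' P top mid fringe) : Finset N :=
  Finset.univ.image fringe

include g

lemma card_FR : g.FR.card = d := by
  rw [FR, Finset.card_image_of_injective _ g.fringe_inj, Finset.card_univ, Fintype.card_fin]

lemma FR_subset : g.FR ⊆ pdomeBase P top mid := by
  intro c hc
  simp only [FR, Finset.mem_image] at hc
  obtain ⟨i, -, rfl⟩ := hc
  exact g.fringe_mem i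

lemma base_subset : pdomeBase P top mid ⊆ P := Finset.sdiff_subset

lemma top_not_base : top ∉ pdomeBase P top mid := fun h => (mem_pdomeBase.mp h).2.1 rfl

lemma mid_not_base : mid ∉ pdomeBase P top mid := fun h => (mem_pdomeBase.mp h).2.2 rfl

lemma mem_FR_iff {c : N} : c ∈ g.FR ↔ ∃ i, c = fringe i := by
  simp [FR, eq_comm]

/-- Global adjacency characterization for a non-fringe base player. -/
lemma adj_nonfringe (hext : ∀ c ∈ P, c ≠ top → ∀ y, G.Adj c y → y ∈ P)
    {c : N} (hc : c ∈ pdomeBase P top mid) (hcf : c ∉ g.FR) (y : N) :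
    G.Adj c y ↔ y ∈ (pdomeBase P top mid).erase c := by
  obtain ⟨hcP, hct, hcm⟩ := mem_pdomeBase.mp hc
  constructor
  · intro h
    have hyP : y ∈ P := hext c hcP hct y h
    rcases (g.adj_iff c hcP y hyP).mp h with ⟨h1, -⟩ | ⟨-, h2⟩ | ⟨-, h3, h4⟩ | ⟨h5, -⟩ | ⟨-, i, h6⟩
    · exact absurd h1 hct
    · exact absurd h2 hcm
    · exact Finset.mem_erase.mpr ⟨fun hy => h4 hy.symm, h3⟩
    · exact absurd h5 hcm
    · exact absurd (g.mem_FR_iff.mpr ⟨i, h6⟩) hcf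
  · intro hy
    obtain ⟨hyne, hyB⟩ := Finset.mem_erase.mp hy
    exact (g.adj_iff c hcP y (g.base_subset hyB)).mpr (Or.inr (Or.inr (Or.inl ⟨hc, hyB, fun h => hyne h.symm⟩)))

/-- Global adjacency characterization for a fringe player. -/
lemma adj_fringe (hext : ∀ c ∈ P, c ≠ top → ∀ y, G.Adj c y → y ∈ P)
    {c : N} (hc : c ∈ g.FR) (y : N) :
    G.Adj c y ↔ y ∈ insert mid ((pdomeBase P top mid).erase c) := by
  have hcB : c ∈ pdomeBase P top mid := g.FR_subset hc
  obtain ⟨hcP, hct, hcm⟩ := mem_pdomeBase.mp hcB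
  constructor
  · intro h
    have hyP : y ∈ P := hext c hcP hct y h
    rcases (g.adj_iff c hcP y hyP).mp h with ⟨h1, -⟩ | ⟨-, h2⟩ | ⟨-, h3, h4⟩ | ⟨h5, -⟩ | ⟨h6, -⟩
    · exact absurd h1 hct
    · exact absurd h2 hcm
    · exact Finset.mem_insert_of_mem (Finset.mem_erase.mpr ⟨fun hy => h4 hy.symm, h3⟩)
    · exact absurd h5 hcm
    · rw [h6]; exact Finset.mem_insert_self _ _
  · intro hy
    rcases Finset.mem_insert.mp hy with rfl | hy'
    · refine (g.adj_iff c hcP y g.mid_mem).mpr ?_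
      exact Or.inr (Or.inr (Or.inr (Or.inr ⟨rfl, g.mem_FR_iff.mp hc⟩)))
    · obtain ⟨hyne, hyB⟩ := Finset.mem_erase.mp hy'
      exact (g.adj_iff c hcP y (g.base_subset hyB)).mpr (Or.inr (Or.inr (Or.inl ⟨hcB, hyB, fun h => hyne h.symm⟩)))

/-- Global adjacency characterization for the mid player. -/
lemma adj_mid (hext : ∀ c ∈ P, c ≠ top → ∀ y, G.Adj c y → y ∈ P) (y : N) :
    G.Adj mid y ↔ y ∈ insert top g.FR := by
  constructor
  · intro h
    have hyP : y ∈ P := hext mid g.mid_mem g.mid_ne_top y h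
    rcases (g.adj_iff mid g.mid_mem y hyP).mp h with ⟨h1, -⟩ | ⟨h2, -⟩ | ⟨h3, -, -⟩ | ⟨-, i, h5⟩ | ⟨h6, -⟩
    · exact absurd h1 g.mid_ne_top
    · rw [h2]; exact Finset.mem_insert_self _ _
    · exact absurd h3 g.mid_not_base
    · exact Finset.mem_insert_of_mem (g.mem_FR_iff.mpr ⟨i, h5⟩)
    · exact absurd (h6 ▸ h) (G.loopless.irrefl mid)
  · intro hy
    rcases Finset.mem_insert.mp hy with rfl | hy'
    · exact (g.adj_iff mid g.mid_mem y g.top_mem).mpr (Or.inr (Or.inl ⟨rfl, rfl⟩))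
    · refine (g.adj_iff mid g.mid_mem y (g.base_subset (g.FR_subset hy'))).mpr ?_
      exact Or.inr (Or.inr (Or.inr (Or.inl ⟨rfl, g.mem_FR_iff.mp hy'⟩)))

end IsPinchedDomeGadget

/-- `friendsIn` from a global adjacency characterization. -/
lemma friendsIn_eq_inter {c : N} {S : Finset N} (h : ∀ y, G.Adj c y ↔ y ∈ S) (X : Finset N) :
    friendsIn G X c = X ∩ S := by
  ext y
  simp [friendsIn, h y, Finset.mem_inter]

/-- enemy set from a global adjacency characterization. -/
lemma enemies_eq_sdiff {c : N} {S : Finset N} (h : ∀ y, G.Adj c y ↔ y ∈ S) (X : Finset N) :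
    (X.filter fun j => ¬ G.Adj c j ∧ j ≠ c) = X \ insert c S := by
  ext y
  simp only [Finset.mem_filter, Finset.mem_sdiff, Finset.mem_insert, h y]
  tauto

lemma fval_formula {c : N} {S : Finset N} (h : ∀ y, G.Adj c y ↔ y ∈ S) (X : Finset N) :
    fval G X c = (Fintype.card N : ℤ) * ((X ∩ S).card : ℤ) - ((X \ insert c S).card : ℤ) := by
  rw [fval, friendsIn_eq_inter h, enemies_eq_sdiff h]

lemma fval_le_of {c : N} {S E' : Finset N} (h : ∀ y, G.Adj c y ↔ y ∈ S) (X : Finset N)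
    (hE : E' ⊆ X \ insert c S) :
    fval G X c ≤ (Fintype.card N : ℤ) * ((X ∩ S).card : ℤ) - (E'.card : ℤ) := by
  rw [fval_formula h]
  have := Finset.card_le_card hE
  have h2 : (E'.card : ℤ) ≤ ((X \ insert c S).card : ℤ) := by exact_mod_cast this
  linarith

end Gadget

section GadgetVals

set_option linter.unusedSectionVars false

variable {N : Type*} [Fintype N] [DecidableEq N] {G : SimpleGraph N}
  {d k' : ℕ} {P : Finset N} {top mid : N} {fringe : Fin d → N}

namespace IsPinchedDomeGadget

variable (g : IsPinchedDomeGadget G d k' P top mid fringe)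

include g

lemma P_sdiff_base : P \ pdomeBase P top mid = {top, mid} := by
  unfold pdomeBase
  rw [Finset.sdiff_sdiff_self_left]
  refine Finset.inter_eq_right.mpr ?_
  intro x hx
  rcases Finset.mem_insert.mp hx with rfl | hx'
  · exact g.top_mem
  · rw [Finset.mem_singleton.mp hx']; exact g.mid_mem

lemma card_topmid : ({top, mid} : Finset N).card = 2 := by
  rw [Finset.card_insert_of_notMem (by simp [Ne.symm g.mid_ne_top]), Finset.card_singleton]

lemma fval_P_nonfringe (hext : ∀ c ∈ P, c ≠ top → ∀ y, G.Adj c y → y ∈ P)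
    {c : N} (hc : c ∈ pdomeBase P top mid) (hcf : c ∉ g.FR) :
    fval G P c = (Fintype.card N : ℤ) * (((pdomeBase P top mid).card : ℤ) - 1) - 2 := by
  have h := g.adj_nonfringe hext hc hcf
  rw [fval_formula h]
  have h1 : P ∩ (pdomeBase P top mid).erase c = (pdomeBase P top mid).erase c :=
    Finset.inter_eq_right.mpr ((Finset.erase_subset _ _).trans g.base_subset)
  have h2 : P \ insert c ((pdomeBase P top mid).erase c) = ({top, mid} : Finset N) := by
    rw [Finset.insert_erase hc, g.P_sdiff_base]
  rw [h1, h2, g.card_topmid, Finset.card_erase_of_mem hc]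
  have hb1 : 1 ≤ (pdomeBase P top mid).card := Finset.card_pos.mpr ⟨c, hc⟩
  rw [Nat.cast_sub hb1]
  norm_num

lemma fval_P_fringe (hext : ∀ c ∈ P, c ≠ top → ∀ y, G.Adj c y → y ∈ P)
    {c : N} (hc : c ∈ g.FR) :
    fval G P c = (Fintype.card N : ℤ) * ((pdomeBase P top mid).card : ℤ) - 1 := by
  have hcB : c ∈ pdomeBase P top mid := g.FR_subset hc
  have h := g.adj_fringe hext hc
  rw [fval_formula h]
  have hmB : mid ∉ (pdomeBase P top mid).erase c := fun hh => g.mid_not_base (Finset.mem_of_mem_erase hh)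
  have h1 : P ∩ insert mid ((pdomeBase P top mid).erase c)
      = insert mid ((pdomeBase P top mid).erase c) := by
    refine Finset.inter_eq_right.mpr ?_
    intro x hx
    rcases Finset.mem_insert.mp hx with rfl | hx'
    · exact g.mid_mem
    · exact g.base_subset (Finset.mem_of_mem_erase hx')
  have h2 : P \ insert c (insert mid ((pdomeBase P top mid).erase c)) = ({top} : Finset N) := by
    have : insert c (insert mid ((pdomeBase P top mid).erase c))
        = insert mid (pdomeBase P top mid) := by
      rw [Finset.insert_comm, Finset.insert_erase hcB]
    rw [this]
    ext y
    simp only [Finset.mem_sdiff, Finset.mem_insert, Finset.mem_singleton, mem_pdomeBase]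
    constructor
    · rintro ⟨hyP, hy⟩
      by_contra hyt
      exact hy (by
        by_cases hm : y = mid
        · exact Or.inl hm
        · exact Or.inr ⟨hyP, hyt, hm⟩)
    · rintro rfl
      refine ⟨g.top_mem, ?_⟩
      rintro (h | ⟨-, h, -⟩)
      · exact g.mid_ne_top h.symm
      · exact h rfl
  rw [h1, h2, Finset.card_insert_of_notMem hmB, Finset.card_erase_of_mem hcB]
  have hb1 : 1 ≤ (pdomeBase P top mid).card := Finset.card_pos.mpr ⟨c, hcB⟩
  rw [Finset.card_singleton]
  have : ((pdomeBase P top mid).card - 1 + 1 : ℕ) = (pdomeBase P top mid).card := by omega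
  rw [this]
  norm_num

lemma fval_P_mid (hext : ∀ c ∈ P, c ≠ top → ∀ y, G.Adj c y → y ∈ P) :
    fval G P mid = (Fintype.card N : ℤ) * ((d : ℤ) + 1)
      - (((pdomeBase P top mid).card : ℤ) - (d : ℤ)) := by
  have h := g.adj_mid hext
  rw [fval_formula h]
  have htF : top ∉ g.FR := fun hh => g.top_not_base (g.FR_subset hh)
  have h1 : P ∩ insert top g.FR = insert top g.FR := by
    refine Finset.inter_eq_right.mpr ?_
    intro x hx
    rcases Finset.mem_insert.mp hx with rfl | hx'
    · exact g.top_mem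
    · exact g.base_subset (g.FR_subset hx')
  have h2 : P \ insert mid (insert top g.FR) = pdomeBase P top mid \ g.FR := by
    ext y
    simp only [Finset.mem_sdiff, Finset.mem_insert, mem_pdomeBase]
    constructor
    · rintro ⟨hyP, hy⟩
      push_neg at hy
      exact ⟨⟨hyP, hy.2.1, hy.1⟩, hy.2.2⟩
    · rintro ⟨⟨hyP, hyt, hym⟩, hyF⟩
      exact ⟨hyP, by push_neg; exact ⟨hym, hyt, hyF⟩⟩
  rw [h1, h2, Finset.card_insert_of_notMem htF, g.card_FR,
    Finset.card_sdiff_of_subset (g.FR_subset), g.card_FR]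
  have hdb : d ≤ (pdomeBase P top mid).card := by
    rw [← g.card_FR]; exact Finset.card_le_card g.FR_subset
  rw [Nat.cast_sub hdb]
  push_cast
  ring

lemma adj_top_in_P : ∀ y ∈ P, (G.Adj top y ↔ y = mid) := by
  intro y hyP
  constructor
  · intro h
    rcases (g.adj_iff top g.top_mem y hyP).mp h with ⟨-, h1⟩ | ⟨-, h2⟩ | ⟨h3, -, -⟩ | ⟨h4, -⟩ | ⟨-, i, h6⟩
    · exact h1
    · exact absurd h2 (Ne.symm g.mid_ne_top)
    · exact absurd h3 g.top_not_base
    · exact absurd h4 (Ne.symm g.mid_ne_top)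
    · have hmem := g.fringe_mem i
      rw [← h6] at hmem
      exact absurd hmem g.top_not_base
  · intro hy
    rw [hy]
    exact (g.adj_iff top g.top_mem mid g.mid_mem).mpr (Or.inl ⟨rfl, rfl⟩)

lemma fval_P_top : fval G P top = (Fintype.card N : ℤ) - ((pdomeBase P top mid).card : ℤ) := by
  have h1 : friendsIn G P top = {mid} := by
    ext y
    simp only [friendsIn, Finset.mem_filter, Finset.mem_singleton]
    constructor
    · rintro ⟨hyP, hadj⟩
      exact (g.adj_top_in_P y hyP).mp hadj
    · intro hy
      rw [hy]
      exact ⟨g.mid_mem, (g.adj_top_in_P mid g.mid_mem).mpr rfl⟩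
  have h2 : (P.filter fun j => ¬ G.Adj top j ∧ j ≠ top) = pdomeBase P top mid := by
    ext y
    simp only [Finset.mem_filter, mem_pdomeBase]
    constructor
    · rintro ⟨hyP, hna, hyt⟩
      refine ⟨hyP, hyt, ?_⟩
      rintro rfl
      exact hna ((g.adj_top_in_P y hyP).mpr rfl)
    · rintro ⟨hyP, hyt, hym⟩
      exact ⟨hyP, fun h => hym ((g.adj_top_in_P y hyP).mp h), hyt⟩
  rw [fval, h1, h2, Finset.card_singleton]
  norm_num

end IsPinchedDomeGadget

end GadgetVals

section Cases

set_option linter.unusedSectionVars false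
set_option maxHeartbeats 1000000

variable {N : Type*} [Fintype N] [DecidableEq N] {G : SimpleGraph N}
  {d k' : ℕ} {P : Finset N} {top mid : N} {fringe : Fin d → N}

namespace IsPinchedDomeGadget

variable (g : IsPinchedDomeGadget G d k' P top mid fringe)

include g

lemma friendsP_nonfringe (hext : ∀ c ∈ P, c ≠ top → ∀ y, G.Adj c y → y ∈ P)
    {c : N} (hc : c ∈ pdomeBase P top mid) (hcf : c ∉ g.FR) :
    friendsIn G P c = (pdomeBase P top mid).erase c := by
  rw [friendsIn_eq_inter (g.adj_nonfringe hext hc hcf)]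
  exact Finset.inter_eq_right.mpr ((Finset.erase_subset _ _).trans g.base_subset)

lemma friendsP_fringe (hext : ∀ c ∈ P, c ≠ top → ∀ y, G.Adj c y → y ∈ P)
    {c : N} (hc : c ∈ g.FR) :
    friendsIn G P c = insert mid ((pdomeBase P top mid).erase c) := by
  rw [friendsIn_eq_inter (g.adj_fringe hext hc)]
  refine Finset.inter_eq_right.mpr ?_
  intro x hx
  rcases Finset.mem_insert.mp hx with rfl | hx'
  · exact g.mid_mem
  · exact g.base_subset (Finset.mem_of_mem_erase hx')

lemma friendsP_mid (hext : ∀ c ∈ P, c ≠ top → ∀ y, G.Adj c y → y ∈ P) :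
    friendsIn G P mid = insert top g.FR := by
  rw [friendsIn_eq_inter (g.adj_mid hext)]
  refine Finset.inter_eq_right.mpr ?_
  intro x hx
  rcases Finset.mem_insert.mp hx with rfl | hx'
  · exact g.top_mem
  · exact g.base_subset (g.FR_subset hx')

/-- Split of the base minus a non-fringe element. -/
lemma base_erase_split {j : N} (hj : j ∈ pdomeBase P top mid) (hjf : j ∉ g.FR) :
    (pdomeBase P top mid).erase j
      = g.FR ∪ ((pdomeBase P top mid \ g.FR).erase j) := by
  ext x
  simp only [Finset.mem_erase, Finset.mem_union, Finset.mem_sdiff]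
  constructor
  · rintro ⟨hxj, hxB⟩
    by_cases hxF : x ∈ g.FR
    · exact Or.inl hxF
    · exact Or.inr ⟨hxj, hxB, hxF⟩
  · rintro (hxF | ⟨hxj, hxB, -⟩)
    · exact ⟨fun h => hjf (h ▸ hxF), g.FR_subset hxF⟩
    · exact ⟨hxj, hxB⟩

lemma base_erase_split' {c : N} (hc : c ∈ g.FR) :
    (pdomeBase P top mid).erase c
      = (g.FR.erase c) ∪ (pdomeBase P top mid \ g.FR) := by
  ext x
  simp only [Finset.mem_erase, Finset.mem_union, Finset.mem_sdiff]
  constructor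
  · rintro ⟨hxc, hxB⟩
    by_cases hxF : x ∈ g.FR
    · exact Or.inl ⟨hxc, hxF⟩
    · exact Or.inr ⟨hxB, hxF⟩
  · rintro (⟨hxc, hxF⟩ | ⟨hxB, hxF⟩)
    · exact ⟨hxc, g.FR_subset hxF⟩
    · exact ⟨fun h => hxF (h ▸ hc), hxB⟩


lemma top_notin1 {c : N} (hcB : c ∈ pdomeBase P top mid) :
    top ∉ insert c (insert mid ((pdomeBase P top mid).erase c)) := by
  intro hx
  rcases Finset.mem_insert.mp hx with h | h
  · exact g.top_not_base (h ▸ hcB)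
  · rcases Finset.mem_insert.mp h with h' | h'
    · exact g.mid_ne_top h'.symm
    · exact g.top_not_base (Finset.mem_of_mem_erase h')

lemma top_notin2 {c : N} (hcB : c ∈ pdomeBase P top mid) :
    top ∉ insert c ((pdomeBase P top mid).erase c) := by
  intro hx
  rcases Finset.mem_insert.mp hx with h | h
  · exact g.top_not_base (h ▸ hcB)
  · exact g.top_not_base (Finset.mem_of_mem_erase h)

lemma mid_notin2 {c : N} (hcB : c ∈ pdomeBase P top mid) :
    mid ∉ insert c ((pdomeBase P top mid).erase c) := by
  intro hx
  rcases Finset.mem_insert.mp hx with h | h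
  · exact g.mid_not_base (h ▸ hcB)
  · exact g.mid_not_base (Finset.mem_of_mem_erase h)

lemma card_insert_mid_erase {c : N} (hcB : c ∈ pdomeBase P top mid) :
    (insert mid ((pdomeBase P top mid).erase c)).card = (pdomeBase P top mid).card := by
  have hb1 : 1 ≤ (pdomeBase P top mid).card := Finset.card_pos.mpr ⟨c, hcB⟩
  rw [Finset.card_insert_of_notMem (fun hh => g.mid_not_base (Finset.mem_of_mem_erase hh)),
    Finset.card_erase_of_mem hcB]
  omega

/-- fringe player value bound in `C`, enemy top. -/
lemma fvalC_fringe_le_top (hext : ∀ c ∈ P, c ≠ top → ∀ y, G.Adj c y → y ∈ P)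
    {C : Finset N} {c : N} (hcF : c ∈ g.FR) (htopC : top ∈ C) :
    fval G C c ≤ (Fintype.card N : ℤ) * ((pdomeBase P top mid).card : ℤ) - 1 := by
  have hcB : c ∈ pdomeBase P top mid := g.FR_subset hcF
  have hb := fval_le_of (g.adj_fringe hext hcF) C (E' := {top})
    (by intro x hx
        rw [Finset.mem_singleton] at hx
        subst hx
        exact Finset.mem_sdiff.mpr ⟨htopC, g.top_notin1 hcB⟩)
  refine hb.trans ?_
  have hcard : (C ∩ insert mid ((pdomeBase P top mid).erase c)).card
      ≤ (pdomeBase P top mid).card := by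
    refine le_trans (Finset.card_le_card Finset.inter_subset_right) ?_
    rw [g.card_insert_mid_erase hcB]
  have h2 : ((C ∩ insert mid ((pdomeBase P top mid).erase c)).card : ℤ)
      ≤ ((pdomeBase P top mid).card : ℤ) := by exact_mod_cast hcard
  have h3 : (0:ℤ) ≤ (Fintype.card N : ℤ) := by positivity
  simp only [Finset.card_singleton]
  push_cast
  nlinarith

/-- non-fringe player value bound in `C`, enemies top and mid. -/
lemma fvalC_nonfringe_le_topmid (hext : ∀ c ∈ P, c ≠ top → ∀ y, G.Adj c y → y ∈ P)
    {C : Finset N} {c : N} (hcB : c ∈ pdomeBase P top mid) (hcF : c ∉ g.FR)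
    (htopC : top ∈ C) (hmidC : mid ∈ C) :
    fval G C c ≤ (Fintype.card N : ℤ) * (((pdomeBase P top mid).card : ℤ) - 1) - 2 := by
  have hb := fval_le_of (g.adj_nonfringe hext hcB hcF) C (E' := {top, mid})
    (by intro x hx
        rcases Finset.mem_insert.mp hx with rfl | hx'
        · exact Finset.mem_sdiff.mpr ⟨htopC, g.top_notin2 hcB⟩
        · rw [Finset.mem_singleton] at hx'
          subst hx'
          exact Finset.mem_sdiff.mpr ⟨hmidC, g.mid_notin2 hcB⟩)
  refine hb.trans ?_
  have hb1 : 1 ≤ (pdomeBase P top mid).card := Finset.card_pos.mpr ⟨c, hcB⟩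
  have hcard : (C ∩ (pdomeBase P top mid).erase c).card ≤ (pdomeBase P top mid).card - 1 := by
    refine le_trans (Finset.card_le_card Finset.inter_subset_right) ?_
    rw [Finset.card_erase_of_mem hcB]
  have h2 : ((C ∩ (pdomeBase P top mid).erase c).card : ℤ)
      ≤ ((pdomeBase P top mid).card : ℤ) - 1 := by
    have := (Nat.cast_le (α := ℤ)).mpr hcard
    rw [Nat.cast_sub hb1] at this
    exact_mod_cast this
  have h3 : (0:ℤ) ≤ (Fintype.card N : ℤ) := by positivity
  have hcard2 : ({top, mid} : Finset N).card = 2 := g.card_topmid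
  rw [hcard2]
  push_cast
  nlinarith

theorem case1a {w : ℚ} {C : Finset N}
    (hext : ∀ c ∈ P, c ≠ top → ∀ y, G.Adj c y → y ∈ P)
    (hw0 : 0 ≤ w)
    (hBC : pdomeBase P top mid ⊆ C) (hmidC : mid ∈ C) (htopC : top ∈ C)
    {j : N} (hjB : j ∈ pdomeBase P top mid) (hjF : j ∉ g.FR)
    (hd1 : 1 ≤ d) :
    utilAvgAL G w C j ≤ utilAvgAL G w P j := by
  have hfP : friendsIn G P j = (pdomeBase P top mid).erase j :=
    g.friendsP_nonfringe hext hjB hjF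
  have hfC : friendsIn G C j = (pdomeBase P top mid).erase j := by
    rw [friendsIn_eq_inter (g.adj_nonfringe hext hjB hjF)]
    exact Finset.inter_eq_right.mpr fun x hx => hBC (Finset.mem_of_mem_erase hx)
  refine util_le_S2 G w hw0 C P j (hfC.trans hfP.symm) ?_ ?_ ?_
  · -- nonempty: contains a fringe player
    rw [hfP]
    have hfr0 : fringe ⟨0, hd1⟩ ∈ (pdomeBase P top mid).erase j := by
      refine Finset.mem_erase.mpr ⟨?_, g.fringe_mem _⟩
      intro h
      exact hjF (h ▸ g.mem_FR_iff.mpr ⟨⟨0, hd1⟩, rfl⟩)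
    exact ⟨_, hfr0⟩
  · rw [hfP]
    refine Finset.sum_le_sum ?_
    intro c hc
    have hcB : c ∈ pdomeBase P top mid := Finset.mem_of_mem_erase hc
    by_cases hcF : c ∈ g.FR
    · have h1 := g.fvalC_fringe_le_top hext hcF htopC
      have h2 := g.fval_P_fringe hext hcF
      rw [h2]
      exact_mod_cast h1
    · have h1 := g.fvalC_nonfringe_le_topmid hext hcB hcF htopC hmidC
      have h2 := g.fval_P_nonfringe hext hcB hcF
      rw [h2]
      exact_mod_cast h1
  · rw [g.fval_P_nonfringe hext hjB hjF]
    exact g.fvalC_nonfringe_le_topmid hext hjB hjF htopC hmidC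

end IsPinchedDomeGadget

end Cases

section Cases2

set_option linter.unusedSectionVars false
set_option maxHeartbeats 1000000

variable {N : Type*} [Fintype N] [DecidableEq N] {G : SimpleGraph N}
  {d k' : ℕ} {P : Finset N} {top mid : N} {fringe : Fin d → N}

namespace IsPinchedDomeGadget

variable (g : IsPinchedDomeGadget G d k' P top mid fringe)

include g

lemma fvalC_fringe_le_plain (hext : ∀ c ∈ P, c ≠ top → ∀ y, G.Adj c y → y ∈ P)
    (C : Finset N) {c : N} (hcF : c ∈ g.FR) :
    fval G C c ≤ (Fintype.card N : ℤ) * ((pdomeBase P top mid).card : ℤ) := by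
  have hcB : c ∈ pdomeBase P top mid := g.FR_subset hcF
  refine (fval_le_card G C c).trans ?_
  have h1 : friendsIn G C c ⊆ insert mid ((pdomeBase P top mid).erase c) := by
    rw [friendsIn_eq_inter (g.adj_fringe hext hcF)]
    exact Finset.inter_subset_right
  have h2 : (friendsIn G C c).card ≤ (pdomeBase P top mid).card := by
    rw [← g.card_insert_mid_erase hcB]
    exact Finset.card_le_card h1
  have h3 : (0:ℤ) ≤ (Fintype.card N : ℤ) := by positivity
  have h4 : ((friendsIn G C c).card : ℤ) ≤ ((pdomeBase P top mid).card : ℤ) := by exact_mod_cast h2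
  nlinarith

lemma fvalC_fringe_le_nomid (hext : ∀ c ∈ P, c ≠ top → ∀ y, G.Adj c y → y ∈ P)
    {C : Finset N} {c : N} (hcF : c ∈ g.FR) (hmidC : mid ∉ C) :
    fval G C c ≤ (Fintype.card N : ℤ) * (((pdomeBase P top mid).card : ℤ) - 1) := by
  have hcB : c ∈ pdomeBase P top mid := g.FR_subset hcF
  have hb1 : 1 ≤ (pdomeBase P top mid).card := Finset.card_pos.mpr ⟨c, hcB⟩
  refine (fval_le_card G C c).trans ?_
  have h1 : friendsIn G C c ⊆ (pdomeBase P top mid).erase c := by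
    rw [friendsIn_eq_inter (g.adj_fringe hext hcF)]
    intro x hx
    obtain ⟨hxC, hxS⟩ := Finset.mem_inter.mp hx
    rcases Finset.mem_insert.mp hxS with rfl | hx'
    · exact absurd hxC hmidC
    · exact hx'
  have h2 : (friendsIn G C c).card ≤ (pdomeBase P top mid).card - 1 := by
    rw [← Finset.card_erase_of_mem hcB]
    exact Finset.card_le_card h1
  have h4 : ((friendsIn G C c).card : ℤ) ≤ ((pdomeBase P top mid).card : ℤ) - 1 := by
    have := (Nat.cast_le (α := ℤ)).mpr h2
    rw [Nat.cast_sub hb1] at this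
    exact_mod_cast this
  have h3 : (0:ℤ) ≤ (Fintype.card N : ℤ) := by positivity
  nlinarith

lemma fvalC_nonfringe_le_plain (hext : ∀ c ∈ P, c ≠ top → ∀ y, G.Adj c y → y ∈ P)
    (C : Finset N) {c : N} (hcB : c ∈ pdomeBase P top mid) (hcF : c ∉ g.FR) :
    fval G C c ≤ (Fintype.card N : ℤ) * (((pdomeBase P top mid).card : ℤ) - 1) := by
  have hb1 : 1 ≤ (pdomeBase P top mid).card := Finset.card_pos.mpr ⟨c, hcB⟩
  refine (fval_le_card G C c).trans ?_
  have h1 : friendsIn G C c ⊆ (pdomeBase P top mid).erase c := by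
    rw [friendsIn_eq_inter (g.adj_nonfringe hext hcB hcF)]
    exact Finset.inter_subset_right
  have h2 : (friendsIn G C c).card ≤ (pdomeBase P top mid).card - 1 := by
    rw [← Finset.card_erase_of_mem hcB]
    exact Finset.card_le_card h1
  have h4 : ((friendsIn G C c).card : ℤ) ≤ ((pdomeBase P top mid).card : ℤ) - 1 := by
    have := (Nat.cast_le (α := ℤ)).mpr h2
    rw [Nat.cast_sub hb1] at this
    exact_mod_cast this
  have h3 : (0:ℤ) ≤ (Fintype.card N : ℤ) := by positivity
  nlinarith

lemma fvalC_nonfringe_le_mid (hext : ∀ c ∈ P, c ≠ top → ∀ y, G.Adj c y → y ∈ P)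
    {C : Finset N} {c : N} (hcB : c ∈ pdomeBase P top mid) (hcF : c ∉ g.FR)
    (hmidC : mid ∈ C) :
    fval G C c ≤ (Fintype.card N : ℤ) * (((pdomeBase P top mid).card : ℤ) - 1) - 1 := by
  have hb1 : 1 ≤ (pdomeBase P top mid).card := Finset.card_pos.mpr ⟨c, hcB⟩
  have hb := fval_le_of (g.adj_nonfringe hext hcB hcF) C (E' := {mid})
    (by intro x hx
        rw [Finset.mem_singleton] at hx
        subst hx
        exact Finset.mem_sdiff.mpr ⟨hmidC, g.mid_notin2 hcB⟩)
  refine hb.trans ?_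
  have h2 : (C ∩ (pdomeBase P top mid).erase c).card ≤ (pdomeBase P top mid).card - 1 := by
    refine le_trans (Finset.card_le_card Finset.inter_subset_right) ?_
    rw [Finset.card_erase_of_mem hcB]
  have h4 : ((C ∩ (pdomeBase P top mid).erase c).card : ℤ)
      ≤ ((pdomeBase P top mid).card : ℤ) - 1 := by
    have := (Nat.cast_le (α := ℤ)).mpr h2
    rw [Nat.cast_sub hb1] at this
    exact_mod_cast this
  have h3 : (0:ℤ) ≤ (Fintype.card N : ℤ) := by positivity
  simp only [Finset.card_singleton]
  push_cast
  nlinarith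

lemma fvalC_mid_le_plain (hext : ∀ c ∈ P, c ≠ top → ∀ y, G.Adj c y → y ∈ P)
    (C : Finset N) :
    fval G C mid ≤ (Fintype.card N : ℤ) * ((d : ℤ) + 1) := by
  refine (fval_le_card G C mid).trans ?_
  have h1 : friendsIn G C mid ⊆ insert top g.FR := by
    rw [friendsIn_eq_inter (g.adj_mid hext)]
    exact Finset.inter_subset_right
  have h2 : (friendsIn G C mid).card ≤ d + 1 := by
    refine le_trans (Finset.card_le_card h1) ?_
    refine le_trans (Finset.card_insert_le _ _) ?_
    rw [g.card_FR]
  have h4 : ((friendsIn G C mid).card : ℤ) ≤ (d : ℤ) + 1 := by exact_mod_cast h2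
  have h3 : (0:ℤ) ≤ (Fintype.card N : ℤ) := by positivity
  nlinarith

lemma fvalC_mid_le_notop (hext : ∀ c ∈ P, c ≠ top → ∀ y, G.Adj c y → y ∈ P)
    {C : Finset N} (htopC : top ∉ C) (hBFC : pdomeBase P top mid \ g.FR ⊆ C) :
    fval G C mid ≤ (Fintype.card N : ℤ) * (d : ℤ)
      - (((pdomeBase P top mid).card : ℤ) - (d : ℤ)) := by
  have hb := fval_le_of (g.adj_mid hext) C (E' := pdomeBase P top mid \ g.FR)
    (by intro x hx
        obtain ⟨hxB, hxF⟩ := Finset.mem_sdiff.mp hx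
        refine Finset.mem_sdiff.mpr ⟨hBFC hx, ?_⟩
        intro hmem
        rcases Finset.mem_insert.mp hmem with h | h
        · exact g.mid_not_base (h ▸ hxB)
        · rcases Finset.mem_insert.mp h with h' | h'
          · exact g.top_not_base (h' ▸ hxB)
          · exact hxF h')
  refine hb.trans ?_
  have hsub2 : C ∩ insert top g.FR ⊆ g.FR := by
    intro x hx
    obtain ⟨hxC, hxS⟩ := Finset.mem_inter.mp hx
    rcases Finset.mem_insert.mp hxS with rfl | h
    · exact absurd hxC htopC
    · exact h
  have h2 : (C ∩ insert top g.FR).card ≤ d :=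
    le_of_le_of_eq (Finset.card_le_card hsub2) g.card_FR
  have h4 : ((C ∩ insert top g.FR).card : ℤ) ≤ (d : ℤ) := by exact_mod_cast h2
  have hdc : d ≤ (pdomeBase P top mid).card := by
    exact le_of_eq_of_le g.card_FR.symm (Finset.card_le_card g.FR_subset)
  have h5 : ((pdomeBase P top mid \ g.FR).card : ℤ)
      = ((pdomeBase P top mid).card : ℤ) - (d : ℤ) := by
    rw [Finset.card_sdiff_of_subset g.FR_subset, g.card_FR, Nat.cast_sub hdc]
  have h3 : (0:ℤ) ≤ (Fintype.card N : ℤ) := by positivity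
  rw [h5]
  nlinarith

end IsPinchedDomeGadget

end Cases2

section Cases3

set_option linter.unusedSectionVars false
set_option maxHeartbeats 1000000

variable {N : Type*} [Fintype N] [DecidableEq N] {G : SimpleGraph N}
  {d k' : ℕ} {P : Finset N} {top mid : N} {fringe : Fin d → N}

namespace IsPinchedDomeGadget

variable (g : IsPinchedDomeGadget G d k' P top mid fringe)

include g

/-- Case 1b: `B ⊆ C`, `mid ∈ C`, `top ∉ C`: a fringe player cannot improve. -/
theorem case1b {w : ℚ} {C : Finset N}
    (hext : ∀ c ∈ P, c ≠ top → ∀ y, G.Adj c y → y ∈ P)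
    (hw2 : ((Fintype.card N : ℚ))^2 + (Fintype.card N : ℚ) ≤ w)
    (hBC : pdomeBase P top mid ⊆ C) (hmidC : mid ∈ C) (htopC : top ∉ C)
    {c : N} (hcF : c ∈ g.FR)
    (hn : 2 * (pdomeBase P top mid).card + 1 ≤ Fintype.card N) :
    utilAvgAL G w C c ≤ utilAvgAL G w P c := by
  have hcB : c ∈ pdomeBase P top mid := g.FR_subset hcF
  have hb1 : 1 ≤ (pdomeBase P top mid).card := Finset.card_pos.mpr ⟨c, hcB⟩
  have hmB : mid ∉ (pdomeBase P top mid).erase c :=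
    fun hh => g.mid_not_base (Finset.mem_of_mem_erase hh)
  have hfP : friendsIn G P c = insert mid ((pdomeBase P top mid).erase c) :=
    g.friendsP_fringe hext hcF
  have hfC : friendsIn G C c = insert mid ((pdomeBase P top mid).erase c) := by
    rw [friendsIn_eq_inter (g.adj_fringe hext hcF)]
    refine Finset.inter_eq_right.mpr ?_
    intro x hx
    rcases Finset.mem_insert.mp hx with rfl | hx'
    · exact hmidC
    · exact hBC (Finset.mem_of_mem_erase hx')
  refine util_le_S1' G w C P c hw2 (hfC.trans hfP.symm) ?_ ?_
  · rw [hfP]; exact ⟨mid, Finset.mem_insert_self _ _⟩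
  · rw [hfP, Finset.sum_insert hmB, Finset.sum_insert hmB,
      Finset.card_insert_of_notMem hmB]
    have key1 : (fval G C mid : ℚ) ≤ (fval G P mid : ℚ) - (Fintype.card N : ℚ) := by
      have h1 := g.fvalC_mid_le_notop hext htopC
        (fun x hx => hBC (Finset.mem_sdiff.mp hx).1)
      have h2 := g.fval_P_mid hext
      have : fval G C mid ≤ fval G P mid - (Fintype.card N : ℤ) := by
        rw [h2]; linarith
      exact_mod_cast this
    have key2 : ∀ x ∈ (pdomeBase P top mid).erase c,
        (fval G C x : ℚ) ≤ (fval G P x : ℚ) + 1 := by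
      intro x hx
      have hxB : x ∈ pdomeBase P top mid := Finset.mem_of_mem_erase hx
      by_cases hxF : x ∈ g.FR
      · have h1 := g.fvalC_fringe_le_plain hext C hxF
        have h2 := g.fval_P_fringe hext hxF
        have : fval G C x ≤ fval G P x + 1 := by rw [h2]; linarith
        exact_mod_cast this
      · have h1 := g.fvalC_nonfringe_le_mid hext hxB hxF hmidC
        have h2 := g.fval_P_nonfringe hext hxB hxF
        have : fval G C x ≤ fval G P x + 1 := by rw [h2]; linarith
        exact_mod_cast this
    have hsum2 : ∑ x ∈ (pdomeBase P top mid).erase c, (fval G C x : ℚ)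
        ≤ (∑ x ∈ (pdomeBase P top mid).erase c, (fval G P x : ℚ))
          + ((pdomeBase P top mid).erase c).card := by
      calc ∑ x ∈ (pdomeBase P top mid).erase c, (fval G C x : ℚ)
          ≤ ∑ x ∈ (pdomeBase P top mid).erase c, ((fval G P x : ℚ) + 1) :=
            Finset.sum_le_sum key2
        _ = _ := by rw [Finset.sum_add_distrib, Finset.sum_const, nsmul_eq_mul, mul_one]
    have hcerase : (((pdomeBase P top mid).erase c).card : ℚ)
        = ((pdomeBase P top mid).card : ℚ) - 1 := by
      rw [Finset.card_erase_of_mem hcB, Nat.cast_sub hb1]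
      norm_num
    have hnQ : 2 * ((pdomeBase P top mid).card : ℚ) + 1 ≤ (Fintype.card N : ℚ) := by
      exact_mod_cast hn
    push_cast
    linarith [key1, hsum2, hcerase, hnQ]

/-- Case 1c: `B ⊆ C`, `mid ∉ C`: a non-fringe base player cannot improve. -/
theorem case1c {w : ℚ} {C : Finset N}
    (hext : ∀ c ∈ P, c ≠ top → ∀ y, G.Adj c y → y ∈ P)
    (hw2 : ((Fintype.card N : ℚ))^2 + (Fintype.card N : ℚ) ≤ w)
    (hBC : pdomeBase P top mid ⊆ C) (hmidC : mid ∉ C)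
    {j : N} (hjB : j ∈ pdomeBase P top mid) (hjF : j ∉ g.FR)
    (hd : 2 ≤ d)
    (hn : 2 * (pdomeBase P top mid).card + 1 ≤ Fintype.card N) :
    utilAvgAL G w C j ≤ utilAvgAL G w P j := by
  have hb1 : 1 ≤ (pdomeBase P top mid).card := Finset.card_pos.mpr ⟨j, hjB⟩
  have hfP : friendsIn G P j = (pdomeBase P top mid).erase j :=
    g.friendsP_nonfringe hext hjB hjF
  have hfC : friendsIn G C j = (pdomeBase P top mid).erase j := by
    rw [friendsIn_eq_inter (g.adj_nonfringe hext hjB hjF)]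
    exact Finset.inter_eq_right.mpr fun x hx => hBC (Finset.mem_of_mem_erase hx)
  have hd1 : 1 ≤ d := le_trans (by norm_num) hd
  have hjBF : j ∈ pdomeBase P top mid \ g.FR := Finset.mem_sdiff.mpr ⟨hjB, hjF⟩
  have hdisj : Disjoint g.FR ((pdomeBase P top mid \ g.FR).erase j) := by
    refine Finset.disjoint_left.mpr ?_
    intro x hx hx'
    exact (Finset.mem_sdiff.mp (Finset.mem_of_mem_erase hx')).2 hx
  have hsplit := g.base_erase_split hjB hjF
  -- cardinalities
  have hbm : (pdomeBase P top mid \ g.FR).card + g.FR.card = (pdomeBase P top mid).card :=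
    Finset.card_sdiff_add_card_eq_card g.FR_subset
  have hm1 : 1 ≤ (pdomeBase P top mid \ g.FR).card := Finset.card_pos.mpr ⟨j, hjBF⟩
  have hmerase : ((pdomeBase P top mid \ g.FR).erase j).card
      = (pdomeBase P top mid \ g.FR).card - 1 := Finset.card_erase_of_mem hjBF
  refine util_le_S1' G w C P j hw2 (hfC.trans hfP.symm) ?_ ?_
  · rw [hfP]
    refine ⟨fringe ⟨0, hd1⟩, Finset.mem_erase.mpr ⟨?_, g.fringe_mem _⟩⟩
    intro h
    exact hjF (h ▸ g.mem_FR_iff.mpr ⟨⟨0, hd1⟩, rfl⟩)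
  · rw [hfP, hsplit, Finset.sum_union hdisj, Finset.sum_union hdisj,
      Finset.card_union_of_disjoint hdisj]
    have keyF : ∀ x ∈ g.FR, (fval G C x : ℚ)
        ≤ (fval G P x : ℚ) - ((Fintype.card N : ℚ) - 1) := by
      intro x hx
      have h1 := g.fvalC_fringe_le_nomid hext hx hmidC
      have h2 := g.fval_P_fringe hext hx
      have : fval G C x ≤ fval G P x - ((Fintype.card N : ℤ) - 1) := by
        rw [h2]; linarith
      exact_mod_cast this
    have keyN : ∀ x ∈ (pdomeBase P top mid \ g.FR).erase j,
        (fval G C x : ℚ) ≤ (fval G P x : ℚ) + 2 := by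
      intro x hx
      obtain ⟨hxB, hxF⟩ := Finset.mem_sdiff.mp (Finset.mem_of_mem_erase hx)
      have h1 := g.fvalC_nonfringe_le_plain hext C hxB hxF
      have h2 := g.fval_P_nonfringe hext hxB hxF
      have : fval G C x ≤ fval G P x + 2 := by rw [h2]; linarith
      exact_mod_cast this
    have hs1 : ∑ x ∈ g.FR, (fval G C x : ℚ)
        ≤ (∑ x ∈ g.FR, (fval G P x : ℚ)) - (d : ℚ) * ((Fintype.card N : ℚ) - 1) := by
      calc ∑ x ∈ g.FR, (fval G C x : ℚ)
          ≤ ∑ x ∈ g.FR, ((fval G P x : ℚ) - ((Fintype.card N : ℚ) - 1)) :=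
            Finset.sum_le_sum keyF
        _ = _ := by
            rw [Finset.sum_sub_distrib, Finset.sum_const, nsmul_eq_mul, g.card_FR]
    have hs2 : ∑ x ∈ (pdomeBase P top mid \ g.FR).erase j, (fval G C x : ℚ)
        ≤ (∑ x ∈ (pdomeBase P top mid \ g.FR).erase j, (fval G P x : ℚ))
          + 2 * (((pdomeBase P top mid \ g.FR).erase j).card : ℚ) := by
      calc ∑ x ∈ (pdomeBase P top mid \ g.FR).erase j, (fval G C x : ℚ)
          ≤ ∑ x ∈ (pdomeBase P top mid \ g.FR).erase j, ((fval G P x : ℚ) + 2) :=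
            Finset.sum_le_sum keyN
        _ = _ := by
            rw [Finset.sum_add_distrib, Finset.sum_const, nsmul_eq_mul]
            ring
    -- numeric wrap-up
    have hcm : (((pdomeBase P top mid \ g.FR).erase j).card : ℚ)
        = ((pdomeBase P top mid \ g.FR).card : ℚ) - 1 := by
      rw [hmerase, Nat.cast_sub hm1]; norm_num
    have hFRQ : (g.FR.card : ℚ) = (d : ℚ) := by exact_mod_cast g.card_FR
    have hbmQ : ((pdomeBase P top mid \ g.FR).card : ℚ) + (d : ℚ)
        = ((pdomeBase P top mid).card : ℚ) := by
      have hq : ((pdomeBase P top mid \ g.FR).card : ℚ) + (g.FR.card : ℚ)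
          = ((pdomeBase P top mid).card : ℚ) := by exact_mod_cast hbm
      rw [hFRQ] at hq
      exact hq
    have hnQ : 2 * ((pdomeBase P top mid).card : ℚ) + 1 ≤ (Fintype.card N : ℚ) := by
      exact_mod_cast hn
    have hdQ : (2:ℚ) ≤ (d : ℚ) := by exact_mod_cast hd
    have hmQ : (1:ℚ) ≤ ((pdomeBase P top mid \ g.FR).card : ℚ) := by exact_mod_cast hm1
    have hnQ1 : (0:ℚ) ≤ (Fintype.card N : ℚ) - 1 := by linarith
    have hprod : 2 * ((Fintype.card N : ℚ) - 1) ≤ (d:ℚ) * ((Fintype.card N : ℚ) - 1) := by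
      nlinarith
    push_cast
    linarith [hs1, hs2, hcm, hbmQ, hnQ, hdQ, hmQ, hprod, hFRQ]

end IsPinchedDomeGadget

end Cases3

section Cases4

set_option linter.unusedSectionVars false
set_option maxHeartbeats 1000000

variable {N : Type*} [Fintype N] [DecidableEq N] {G : SimpleGraph N}
  {d k' : ℕ} {P : Finset N} {top mid : N} {fringe : Fin d → N}

namespace IsPinchedDomeGadget

variable (g : IsPinchedDomeGadget G d k' P top mid fringe)

include g

/-- Value bound for a base member of `C` when `(B ∩ C).card ≤ β`. -/
lemma fvalC_base_le_beta (hext : ∀ c ∈ P, c ≠ top → ∀ y, G.Adj c y → y ∈ P)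
    {C : Finset N} {c : N} (hcB : c ∈ pdomeBase P top mid) (hcC : c ∈ C) :
    fval G C c ≤ (Fintype.card N : ℤ) * (((pdomeBase P top mid) ∩ C).card : ℤ) := by
  have hcBC : c ∈ (pdomeBase P top mid) ∩ C := Finset.mem_inter.mpr ⟨hcB, hcC⟩
  have hβ1 : 1 ≤ ((pdomeBase P top mid) ∩ C).card := Finset.card_pos.mpr ⟨c, hcBC⟩
  refine (fval_le_card G C c).trans ?_
  have h3 : (0:ℤ) ≤ (Fintype.card N : ℤ) := by positivity
  have hcard : (friendsIn G C c).card ≤ ((pdomeBase P top mid) ∩ C).card := by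
    by_cases hcF : c ∈ g.FR
    · have h1 : friendsIn G C c ⊆ insert mid (((pdomeBase P top mid) ∩ C).erase c) := by
        rw [friendsIn_eq_inter (g.adj_fringe hext hcF)]
        intro x hx
        obtain ⟨hxC, hxS⟩ := Finset.mem_inter.mp hx
        rcases Finset.mem_insert.mp hxS with rfl | hx'
        · exact Finset.mem_insert_self _ _
        · exact Finset.mem_insert_of_mem (Finset.mem_erase.mpr
            ⟨(Finset.mem_erase.mp hx').1,
             Finset.mem_inter.mpr ⟨Finset.mem_of_mem_erase hx', hxC⟩⟩)
      refine le_trans (Finset.card_le_card h1) ?_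
      refine le_trans (Finset.card_insert_le _ _) ?_
      rw [Finset.card_erase_of_mem hcBC]
      omega
    · have h1 : friendsIn G C c ⊆ ((pdomeBase P top mid) ∩ C).erase c := by
        rw [friendsIn_eq_inter (g.adj_nonfringe hext hcB hcF)]
        intro x hx
        obtain ⟨hxC, hxS⟩ := Finset.mem_inter.mp hx
        exact Finset.mem_erase.mpr ⟨(Finset.mem_erase.mp hxS).1,
          Finset.mem_inter.mpr ⟨Finset.mem_of_mem_erase hxS, hxC⟩⟩
      refine le_trans (Finset.card_le_card h1) ?_
      rw [Finset.card_erase_of_mem hcBC]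
      omega
  have h4 : ((friendsIn G C c).card : ℤ) ≤ (((pdomeBase P top mid) ∩ C).card : ℤ) := by
    exact_mod_cast hcard
  nlinarith

/-- Case 2a: not all of `B` in `C`, non-fringe `j ∈ C` cannot improve. -/
theorem case2a {w : ℚ} {C : Finset N}
    (hext : ∀ c ∈ P, c ≠ top → ∀ y, G.Adj c y → y ∈ P)
    (hw2 : ((Fintype.card N : ℚ))^2 + (Fintype.card N : ℚ) ≤ w)
    (hnBC : ¬ pdomeBase P top mid ⊆ C)
    {j : N} (hjB : j ∈ pdomeBase P top mid) (hjF : j ∉ g.FR) (hjC : j ∈ C)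
    (hd : 2 ≤ d)
    (hdb : d + 3 ≤ (pdomeBase P top mid).card)
    (hn : 2 * (pdomeBase P top mid).card + 1 ≤ Fintype.card N) :
    utilAvgAL G w C j ≤ utilAvgAL G w P j := by
  have hb1 : 1 ≤ (pdomeBase P top mid).card := Finset.card_pos.mpr ⟨j, hjB⟩
  have hd1 : 1 ≤ d := le_trans (by norm_num) hd
  -- β ≤ b - 1
  obtain ⟨x0, hx0B, hx0C⟩ := Finset.not_subset.mp hnBC
  have hβ : ((pdomeBase P top mid) ∩ C).card + 1 ≤ (pdomeBase P top mid).card := by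
    have hsub : (pdomeBase P top mid) ∩ C ⊆ (pdomeBase P top mid).erase x0 := by
      intro x hx
      obtain ⟨hxB, hxC⟩ := Finset.mem_inter.mp hx
      exact Finset.mem_erase.mpr ⟨fun h => hx0C (h ▸ hxC), hxB⟩
    have := Finset.card_le_card hsub
    rw [Finset.card_erase_of_mem hx0B] at this
    omega
  have hfP : friendsIn G P j = (pdomeBase P top mid).erase j :=
    g.friendsP_nonfringe hext hjB hjF
  refine util_le_S1 G w C P j
    ((Fintype.card N : ℚ) * (((pdomeBase P top mid).card : ℚ) - 1)) ?_ hw2 ?_ ?_ ?_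
  · have h1 : (1:ℚ) ≤ ((pdomeBase P top mid).card : ℚ) := by exact_mod_cast hb1
    have h0 : (0:ℚ) ≤ (Fintype.card N : ℚ) := by positivity
    nlinarith
  · -- every C-friend value bounded by A
    intro c hcf
    have hcC : c ∈ C := (friendsIn_subset G C j) hcf
    have hcB : c ∈ pdomeBase P top mid := by
      have : friendsIn G C j ⊆ (pdomeBase P top mid).erase j := by
        rw [friendsIn_eq_inter (g.adj_nonfringe hext hjB hjF)]
        exact Finset.inter_subset_right
      exact Finset.mem_of_mem_erase (this hcf)
    have h1 := g.fvalC_base_le_beta hext hcB hcC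
    have h2 : (((pdomeBase P top mid) ∩ C).card : ℤ) ≤ ((pdomeBase P top mid).card : ℤ) - 1 := by
      exact_mod_cast (by omega : ((pdomeBase P top mid) ∩ C).card ≤ (pdomeBase P top mid).card - 1)
    have h3 : (0:ℤ) ≤ (Fintype.card N : ℤ) := by positivity
    have : fval G C c ≤ (Fintype.card N : ℤ) * (((pdomeBase P top mid).card : ℤ) - 1) := by
      nlinarith
    exact_mod_cast this
  · rw [hfP]
    refine ⟨fringe ⟨0, hd1⟩, Finset.mem_erase.mpr ⟨?_, g.fringe_mem _⟩⟩
    intro h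
    exact hjF (h ▸ g.mem_FR_iff.mpr ⟨⟨0, hd1⟩, rfl⟩)
  · rw [hfP]
    -- exact sum over B.erase j
    have hjBF : j ∈ pdomeBase P top mid \ g.FR := Finset.mem_sdiff.mpr ⟨hjB, hjF⟩
    have hdisj : Disjoint g.FR ((pdomeBase P top mid \ g.FR).erase j) := by
      refine Finset.disjoint_left.mpr ?_
      intro x hx hx'
      exact (Finset.mem_sdiff.mp (Finset.mem_of_mem_erase hx')).2 hx
    have hbm : (pdomeBase P top mid \ g.FR).card + g.FR.card = (pdomeBase P top mid).card :=
      Finset.card_sdiff_add_card_eq_card g.FR_subset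
    have hm1 : 1 ≤ (pdomeBase P top mid \ g.FR).card := Finset.card_pos.mpr ⟨j, hjBF⟩
    rw [g.base_erase_split hjB hjF, Finset.sum_union hdisj,
      Finset.card_union_of_disjoint hdisj]
    have hs1 : ∑ x ∈ g.FR, (fval G P x : ℚ)
        = (d : ℚ) * ((Fintype.card N : ℚ) * ((pdomeBase P top mid).card : ℚ) - 1) := by
      rw [Finset.sum_congr rfl (fun x hx => ?_), Finset.sum_const, nsmul_eq_mul, g.card_FR]
      have h2 := g.fval_P_fringe hext hx
      push_cast [h2]
      ring
    have hs2 : ∑ x ∈ (pdomeBase P top mid \ g.FR).erase j, (fval G P x : ℚ)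
        = (((pdomeBase P top mid \ g.FR).erase j).card : ℚ)
          * ((Fintype.card N : ℚ) * (((pdomeBase P top mid).card : ℚ) - 1) - 2) := by
      rw [Finset.sum_congr rfl (fun x hx => ?_), Finset.sum_const, nsmul_eq_mul]
      obtain ⟨hxB, hxF⟩ := Finset.mem_sdiff.mp (Finset.mem_of_mem_erase hx)
      have h2 := g.fval_P_nonfringe hext hxB hxF
      push_cast [h2]
      ring
    rw [hs1, hs2]
    have hcm : (((pdomeBase P top mid \ g.FR).erase j).card : ℚ)
        = ((pdomeBase P top mid \ g.FR).card : ℚ) - 1 := by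
      rw [Finset.card_erase_of_mem hjBF, Nat.cast_sub hm1]; norm_num
    have hFRQ : (g.FR.card : ℚ) = (d : ℚ) := by exact_mod_cast g.card_FR
    have hbmQ : ((pdomeBase P top mid \ g.FR).card : ℚ) + (d : ℚ)
        = ((pdomeBase P top mid).card : ℚ) := by
      have hq : ((pdomeBase P top mid \ g.FR).card : ℚ) + (g.FR.card : ℚ)
          = ((pdomeBase P top mid).card : ℚ) := by exact_mod_cast hbm
      rw [hFRQ] at hq; exact hq
    have hnQ : 2 * ((pdomeBase P top mid).card : ℚ) + 1 ≤ (Fintype.card N : ℚ) := by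
      exact_mod_cast hn
    have hdQ : (2:ℚ) ≤ (d : ℚ) := by exact_mod_cast hd
    have hmQ : (1:ℚ) ≤ ((pdomeBase P top mid \ g.FR).card : ℚ) := by exact_mod_cast hm1
    have hprod : 2 * (Fintype.card N : ℚ) ≤ (d:ℚ) * (Fintype.card N : ℚ) := by
      have h0 : (0:ℚ) ≤ (Fintype.card N : ℚ) := by positivity
      nlinarith
    have hcm2 : (((pdomeBase P top mid \ g.FR).erase j).card : ℚ)
        = ((pdomeBase P top mid).card : ℚ) - (d:ℚ) - 1 := by rw [hcm]; linarith
    push_cast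
    rw [hcm2, hFRQ]
    nlinarith [hnQ, hdQ, hprod]

/-- Case 2b: all base members of `C` are fringe; a fringe `c ∈ C` cannot improve. -/
theorem case2b {w : ℚ} {C : Finset N}
    (hext : ∀ c ∈ P, c ≠ top → ∀ y, G.Adj c y → y ∈ P)
    (hw2 : ((Fintype.card N : ℚ))^2 + (Fintype.card N : ℚ) ≤ w)
    (hsub : (pdomeBase P top mid) ∩ C ⊆ g.FR)
    {c : N} (hcF : c ∈ g.FR) (hcC : c ∈ C)
    (hd : 2 ≤ d)
    (hdb : d + 3 ≤ (pdomeBase P top mid).card)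
    (hb13 : 13 ≤ (pdomeBase P top mid).card)
    (hn : 2 * (pdomeBase P top mid).card + 1 ≤ Fintype.card N) :
    utilAvgAL G w C c ≤ utilAvgAL G w P c := by
  have hcB : c ∈ pdomeBase P top mid := g.FR_subset hcF
  have hb1 : 1 ≤ (pdomeBase P top mid).card := Finset.card_pos.mpr ⟨c, hcB⟩
  have hmB : mid ∉ (pdomeBase P top mid).erase c :=
    fun hh => g.mid_not_base (Finset.mem_of_mem_erase hh)
  have hβd : ((pdomeBase P top mid) ∩ C).card ≤ d :=
    le_of_le_of_eq (Finset.card_le_card hsub) g.card_FR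
  refine util_le_S1 G w C P c
    ((Fintype.card N : ℚ) * ((d : ℚ) + 1)) ?_ hw2 ?_ ?_ ?_
  · positivity
  · intro x hxf
    have hxC : x ∈ C := (friendsIn_subset G C c) hxf
    have hxS : x ∈ insert mid ((pdomeBase P top mid).erase c) := by
      have : friendsIn G C c ⊆ insert mid ((pdomeBase P top mid).erase c) := by
        rw [friendsIn_eq_inter (g.adj_fringe hext hcF)]
        exact Finset.inter_subset_right
      exact this hxf
    rcases Finset.mem_insert.mp hxS with rfl | hxB'
    · have h1 := g.fvalC_mid_le_plain hext C
      exact_mod_cast h1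
    · have hxB : x ∈ pdomeBase P top mid := Finset.mem_of_mem_erase hxB'
      have h1 := g.fvalC_base_le_beta hext hxB hxC
      have h2 : (((pdomeBase P top mid) ∩ C).card : ℤ) ≤ (d : ℤ) := by exact_mod_cast hβd
      have h3 : (0:ℤ) ≤ (Fintype.card N : ℤ) := by positivity
      have : fval G C x ≤ (Fintype.card N : ℤ) * ((d : ℤ) + 1) := by nlinarith
      exact_mod_cast this
  · rw [g.friendsP_fringe hext hcF]
    exact ⟨mid, Finset.mem_insert_self _ _⟩
  · rw [g.friendsP_fringe hext hcF, Finset.sum_insert hmB,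
      Finset.card_insert_of_notMem hmB]
    -- split the erase sum
    have hdisj : Disjoint (g.FR.erase c) (pdomeBase P top mid \ g.FR) := by
      refine Finset.disjoint_left.mpr ?_
      intro x hx hx'
      exact (Finset.mem_sdiff.mp hx').2 (Finset.mem_of_mem_erase hx)
    rw [g.base_erase_split' hcF, Finset.sum_union hdisj]
    have hFRQ : (g.FR.card : ℚ) = (d : ℚ) := by exact_mod_cast g.card_FR
    have hd1' : 1 ≤ g.FR.card := Finset.card_pos.mpr ⟨c, hcF⟩
    have hcFRe : ((g.FR.erase c).card : ℚ) = (d : ℚ) - 1 := by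
      rw [Finset.card_erase_of_mem hcF, Nat.cast_sub hd1', hFRQ]
      norm_num
    have hs1 : ∑ x ∈ g.FR.erase c, (fval G P x : ℚ)
        = ((d : ℚ) - 1) * ((Fintype.card N : ℚ) * ((pdomeBase P top mid).card : ℚ) - 1) := by
      rw [Finset.sum_congr rfl (fun x hx => ?_), Finset.sum_const, nsmul_eq_mul, hcFRe]
      have h2 := g.fval_P_fringe hext (Finset.mem_of_mem_erase hx)
      push_cast [h2]
      ring
    have hs2 : ∑ x ∈ pdomeBase P top mid \ g.FR, (fval G P x : ℚ)
        = (((pdomeBase P top mid \ g.FR).card) : ℚ)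
          * ((Fintype.card N : ℚ) * (((pdomeBase P top mid).card : ℚ) - 1) - 2) := by
      rw [Finset.sum_congr rfl (fun x hx => ?_), Finset.sum_const, nsmul_eq_mul]
      obtain ⟨hxB, hxF⟩ := Finset.mem_sdiff.mp hx
      have h2 := g.fval_P_nonfringe hext hxB hxF
      push_cast [h2]
      ring
    have hsmid : (fval G P mid : ℚ)
        = (Fintype.card N : ℚ) * ((d : ℚ) + 1)
          - (((pdomeBase P top mid).card : ℚ) - (d : ℚ)) := by
      have h2 := g.fval_P_mid hext
      push_cast [h2]
      ring
    rw [hs1, hs2, hsmid]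
    have hbm : (pdomeBase P top mid \ g.FR).card + g.FR.card = (pdomeBase P top mid).card :=
      Finset.card_sdiff_add_card_eq_card g.FR_subset
    have hbmQ : ((pdomeBase P top mid \ g.FR).card : ℚ) + (d : ℚ)
        = ((pdomeBase P top mid).card : ℚ) := by
      have hq : ((pdomeBase P top mid \ g.FR).card : ℚ) + (g.FR.card : ℚ)
          = ((pdomeBase P top mid).card : ℚ) := by exact_mod_cast hbm
      rw [hFRQ] at hq; exact hq
    have hcerase : (((pdomeBase P top mid).erase c).card : ℚ)
        = ((pdomeBase P top mid).card : ℚ) - 1 := by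
      rw [Finset.card_erase_of_mem hcB, Nat.cast_sub hb1]; norm_num
    have hnQ : 2 * ((pdomeBase P top mid).card : ℚ) + 1 ≤ (Fintype.card N : ℚ) := by
      exact_mod_cast hn
    have hdQ : (2:ℚ) ≤ (d : ℚ) := by exact_mod_cast hd
    have hdbQ : (d:ℚ) + 3 ≤ ((pdomeBase P top mid).card : ℚ) := by exact_mod_cast hdb
    have hb13Q : (13:ℚ) ≤ ((pdomeBase P top mid).card : ℚ) := by exact_mod_cast hb13
    have h0 : (0:ℚ) ≤ (Fintype.card N : ℚ) := by positivity
    have hmain : (0:ℚ) ≤ (Fintype.card N : ℚ) * ((pdomeBase P top mid).card : ℚ)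
        * (((pdomeBase P top mid).card : ℚ) - 3 - (d:ℚ)) := by
      have : (0:ℚ) ≤ (((pdomeBase P top mid).card : ℚ) - 3 - (d:ℚ)) := by linarith
      positivity
    have hprod : 2 * (Fintype.card N : ℚ) ≤ (d:ℚ) * (Fintype.card N : ℚ) := by
      nlinarith
    have hmQ2 : ((pdomeBase P top mid \ g.FR).card : ℚ)
        = ((pdomeBase P top mid).card : ℚ) - (d:ℚ) := by linarith
    have hcu : (((g.FR.erase c ∪ (pdomeBase P top mid \ g.FR))).card : ℚ)
        = ((pdomeBase P top mid).card : ℚ) - 1 := by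
      rw [← g.base_erase_split' hcF]; exact hcerase
    push_cast
    rw [hcu, hmQ2]
    nlinarith [hnQ, hdQ, hmain, hprod, hb13Q, hdbQ]

end IsPinchedDomeGadget

end Cases4

section Assembly

set_option linter.unusedSectionVars false
set_option maxHeartbeats 1000000

variable {N : Type*} [Fintype N] [DecidableEq N] {G : SimpleGraph N}
  {d k' : ℕ} {P : Finset N} {top mid : N} {fringe : Fin d → N}

namespace IsPinchedDomeGadget

variable (g : IsPinchedDomeGadget G d k' P top mid fringe)

include g

theorem no_base {w : ℚ} {Γ : CoalitionStructure N} {C : Finset N}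
    (hC : Blocks (utilAvgAL G w) Γ C)
    (hpart : ∀ c ∈ P, Γ.part c = P)
    (hext : ∀ c ∈ P, c ≠ top → ∀ y, G.Adj c y → y ∈ P)
    (hd : 2 ≤ d) (hdb : d + 3 ≤ (pdomeBase P top mid).card)
    (hb13 : 13 ≤ (pdomeBase P top mid).card)
    (hn : 2 * (pdomeBase P top mid).card + 1 ≤ Fintype.card N)
    (hw : ((Fintype.card N : ℚ))^4 ≤ w) :
    ∀ c ∈ pdomeBase P top mid, c ∉ C := by
  intro c0 hc0 hc0C
  have hblock : ∀ i ∈ C, ¬ utilAvgAL G w C i ≤ utilAvgAL G w (Γ.part i) i :=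
    fun i hi hle => absurd (hC.2 i hi) (not_lt.mpr hle)
  have hnnat : 27 ≤ Fintype.card N := by omega
  have hnQ : (27:ℚ) ≤ (Fintype.card N : ℚ) := by exact_mod_cast hnnat
  have hw2 : ((Fintype.card N : ℚ))^2 + (Fintype.card N : ℚ) ≤ w := by
    have h0 : (0:ℚ) ≤ (Fintype.card N : ℚ) := by positivity
    nlinarith [sq_nonneg ((Fintype.card N : ℚ)), mul_nonneg h0 h0,
      mul_le_mul_of_nonneg_left hnQ (mul_nonneg h0 h0)]
  have hw0 : (0:ℚ) ≤ w := by nlinarith [sq_nonneg ((Fintype.card N : ℚ)), hnQ]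
  have hd1 : 1 ≤ d := by omega
  -- a non-fringe base player exists
  have hbm : (pdomeBase P top mid \ g.FR).card + g.FR.card = (pdomeBase P top mid).card :=
    Finset.card_sdiff_add_card_eq_card g.FR_subset
  have hNFne : ∃ j, j ∈ pdomeBase P top mid \ g.FR := by
    have : 0 < (pdomeBase P top mid \ g.FR).card := by
      have := g.card_FR
      omega
    obtain ⟨j, hj⟩ := Finset.card_pos.mp this
    exact ⟨j, hj⟩
  by_cases hBC : pdomeBase P top mid ⊆ C
  · by_cases hmidC : mid ∈ C
    · by_cases htopC : top ∈ C
      · obtain ⟨j, hj⟩ := hNFne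
        obtain ⟨hjB, hjF⟩ := Finset.mem_sdiff.mp hj
        refine hblock j (hBC hjB) ?_
        rw [hpart j (g.base_subset hjB)]
        exact g.case1a hext hw0 hBC hmidC htopC hjB hjF hd1
      · have hcsF : fringe ⟨0, hd1⟩ ∈ g.FR := g.mem_FR_iff.mpr ⟨⟨0, hd1⟩, rfl⟩
        have hcsB : fringe ⟨0, hd1⟩ ∈ pdomeBase P top mid := g.FR_subset hcsF
        refine hblock _ (hBC hcsB) ?_
        rw [hpart _ (g.base_subset hcsB)]
        exact g.case1b hext hw2 hBC hmidC htopC hcsF hn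
    · obtain ⟨j, hj⟩ := hNFne
      obtain ⟨hjB, hjF⟩ := Finset.mem_sdiff.mp hj
      refine hblock j (hBC hjB) ?_
      rw [hpart j (g.base_subset hjB)]
      exact g.case1c hext hw2 hBC hmidC hjB hjF hd hn
  · by_cases hex : ∃ j ∈ pdomeBase P top mid \ g.FR, j ∈ C
    · obtain ⟨j, hjBF, hjC⟩ := hex
      obtain ⟨hjB, hjF⟩ := Finset.mem_sdiff.mp hjBF
      refine hblock j hjC ?_
      rw [hpart j (g.base_subset hjB)]
      exact g.case2a hext hw2 hBC hjB hjF hjC hd hdb hn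
    · have hsub : (pdomeBase P top mid) ∩ C ⊆ g.FR := by
        intro x hx
        obtain ⟨hxB, hxC⟩ := Finset.mem_inter.mp hx
        by_contra hxF
        exact hex ⟨x, Finset.mem_sdiff.mpr ⟨hxB, hxF⟩, hxC⟩
      have hc0F : c0 ∈ g.FR := hsub (Finset.mem_inter.mpr ⟨hc0, hc0C⟩)
      refine hblock c0 hc0C ?_
      rw [hpart c0 (g.base_subset hc0)]
      exact g.case2b hext hw2 hsub hc0F hc0C hd hdb hb13 hn

theorem no_mid {w : ℚ} {Γ : CoalitionStructure N} {C : Finset N}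
    (hC : Blocks (utilAvgAL G w) Γ C)
    (hpart : ∀ c ∈ P, Γ.part c = P)
    (hext : ∀ c ∈ P, c ≠ top → ∀ y, G.Adj c y → y ∈ P)
    (hd : 2 ≤ d) (hdb : d + 3 ≤ (pdomeBase P top mid).card)
    (hb13 : 13 ≤ (pdomeBase P top mid).card)
    (hn : 2 * (pdomeBase P top mid).card + 1 ≤ Fintype.card N)
    (hw : ((Fintype.card N : ℚ))^4 ≤ w)
    (T : Finset N) (hT : ∀ y, G.Adj top y → y ∈ T) (hT5 : T.card ≤ 5) :
    mid ∉ C := by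
  intro hmidC
  have hbase := g.no_base hC hpart hext hd hdb hb13 hn hw
  have hblock : ∀ i ∈ C, ¬ utilAvgAL G w C i ≤ utilAvgAL G w (Γ.part i) i :=
    fun i hi hle => absurd (hC.2 i hi) (not_lt.mpr hle)
  have hnnat : 27 ≤ Fintype.card N := by omega
  have hnQ : (27:ℚ) ≤ (Fintype.card N : ℚ) := by exact_mod_cast hnnat
  have h0 : (0:ℚ) ≤ (Fintype.card N : ℚ) := by positivity
  have hw2 : ((Fintype.card N : ℚ))^2 + (Fintype.card N : ℚ) ≤ w := by
    nlinarith [sq_nonneg ((Fintype.card N : ℚ)), mul_nonneg h0 h0,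
      mul_le_mul_of_nonneg_left hnQ (mul_nonneg h0 h0)]
  have htF : top ∉ g.FR := fun hh => g.top_not_base (g.FR_subset hh)
  refine hblock mid hmidC ?_
  rw [hpart mid g.mid_mem]
  refine util_le_S1 G w C P mid ((Fintype.card N : ℚ) * 5) (by positivity) hw2 ?_ ?_ ?_
  · intro x hxf
    have hxC : x ∈ C := (friendsIn_subset G C mid) hxf
    have hxS : x ∈ insert top g.FR := by
      have : friendsIn G C mid ⊆ insert top g.FR := by
        rw [friendsIn_eq_inter (g.adj_mid hext)]
        exact Finset.inter_subset_right
      exact this hxf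
    rcases Finset.mem_insert.mp hxS with rfl | hxF
    · have h1 := fval_le_card G C x
      have hsubT : friendsIn G C x ⊆ T := fun y hy =>
        hT y (Finset.mem_filter.mp hy).2
      have h2 : (friendsIn G C x).card ≤ 5 := le_trans (Finset.card_le_card hsubT) hT5
      have h4 : ((friendsIn G C x).card : ℤ) ≤ 5 := by exact_mod_cast h2
      have h3 : (0:ℤ) ≤ (Fintype.card N : ℤ) := by positivity
      have : fval G C x ≤ (Fintype.card N : ℤ) * 5 := by nlinarith
      exact_mod_cast this
    · exact absurd hxC (hbase x (g.FR_subset hxF))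
  · rw [g.friendsP_mid hext]
    exact ⟨top, Finset.mem_insert_self _ _⟩
  · rw [g.friendsP_mid hext, Finset.sum_insert htF,
      Finset.card_insert_of_notMem htF]
    have hstop : (fval G P top : ℚ)
        = (Fintype.card N : ℚ) - ((pdomeBase P top mid).card : ℚ) := by
      have h2 := g.fval_P_top
      push_cast [h2]
      ring
    have hFRQ : (g.FR.card : ℚ) = (d : ℚ) := by exact_mod_cast g.card_FR
    have hsfr : ∑ x ∈ g.FR, (fval G P x : ℚ)
        = (d : ℚ) * ((Fintype.card N : ℚ) * ((pdomeBase P top mid).card : ℚ) - 1) := by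
      rw [Finset.sum_congr rfl (fun x hx => ?_), Finset.sum_const, nsmul_eq_mul, hFRQ]
      have h2 := g.fval_P_fringe hext hx
      push_cast [h2]
      ring
    rw [hstop, hsfr]
    have hnQ2 : 2 * ((pdomeBase P top mid).card : ℚ) + 1 ≤ (Fintype.card N : ℚ) := by
      exact_mod_cast hn
    have hdQ : (2:ℚ) ≤ (d : ℚ) := by exact_mod_cast hd
    have hb13Q : (13:ℚ) ≤ ((pdomeBase P top mid).card : ℚ) := by exact_mod_cast hb13
    have hdbQ : (d:ℚ) + 3 ≤ ((pdomeBase P top mid).card : ℚ) := by exact_mod_cast hdb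
    have hd0 : (0:ℚ) ≤ (d:ℚ) := by positivity
    have hmain : (0:ℚ) ≤ (d:ℚ) * (Fintype.card N : ℚ)
        * (((pdomeBase P top mid).card : ℚ) - 13) := by
      have : (0:ℚ) ≤ ((pdomeBase P top mid).card : ℚ) - 13 := by linarith
      positivity
    have hprod : 2 * (Fintype.card N : ℚ) ≤ (d:ℚ) * (Fintype.card N : ℚ) := by
      nlinarith
    push_cast
    rw [hFRQ]
    nlinarith [hnQ2, hdQ, hmain, hprod, hb13Q, hdbQ]

end IsPinchedDomeGadget

end Assembly

section Instantiation

set_option linter.unusedSectionVars false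
set_option maxHeartbeats 1000000

variable {V N : Type*} [Fintype V] [DecidableEq V] [Fintype N] [DecidableEq N]
  {H : SimpleGraph V} {k : ℕ} {G : SimpleGraph N}
  {Pv : V → Finset N} {Pe : Sym2 V → Finset N} {Pve : V → Sym2 V → Finset N}
  {vp : V → N} {ep : Sym2 V → N} {bp : V → Sym2 V → N}

namespace AvgALReduction

variable (R : AvgALReduction H k G Pv Pe Pve vp ep bp)

include R

lemma vp_mem (v : V) : vp v ∈ Pv v :=
  (R.pdome_v v).choose_spec.choose_spec.top_mem

lemma ep_mem {e : Sym2 V} (he : e ∈ H.edgeSet) : ep e ∈ Pe e :=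
  (R.pdome_e e he).choose_spec.choose_spec.top_mem

lemma bp_mem {v : V} {e : Sym2 V} (he : e ∈ H.edgeSet) (hve : v ∈ e) : bp v e ∈ Pve v e :=
  (R.pdome_ve v e he hve).choose_spec.choose_spec.top_mem

lemma ext_Pv (v : V) :
    ∀ c ∈ Pv v, c ≠ vp v → ∀ y, G.Adj c y → y ∈ Pv v := by
  intro c hcP hct y hadj
  rcases R.adj_cases c y hadj with ⟨v', hx, hy⟩ | ⟨e, he, hx, hy⟩ | ⟨v', e, he, hve, hx, hy⟩
    | ⟨v', e, he, hve, hor⟩ | ⟨v', e, he, hve, hor⟩ | ⟨a, b, hab, hor⟩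
  · by_cases hvv : v' = v
    · exact hvv ▸ hy
    · exact absurd hcP (Finset.disjoint_left.mp (R.disj_vv v' v hvv) hx)
  · exact absurd hx (Finset.disjoint_left.mp (R.disj_v_e v e he) hcP)
  · exact absurd hx (Finset.disjoint_left.mp (R.disj_v_b v v' e he hve) hcP)
  · rcases hor with ⟨hc, -⟩ | ⟨-, hc⟩
    · have hcm : c ∈ Pve v' e := by rw [hc]; exact R.bp_mem he hve
      exact absurd hcm (Finset.disjoint_left.mp (R.disj_v_b v v' e he hve) hcP)
    · have hcv' : c ∈ Pv v' := by rw [hc]; exact R.vp_mem v'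
      by_cases hvv : v' = v
      · subst hvv
        exact absurd hc hct
      · exact absurd hcP (Finset.disjoint_left.mp (R.disj_vv v' v hvv) hcv')
  · rcases hor with ⟨hc, -⟩ | ⟨-, hc⟩
    · have hcm : c ∈ Pve v' e := by rw [hc]; exact R.bp_mem he hve
      exact absurd hcm (Finset.disjoint_left.mp (R.disj_v_b v v' e he hve) hcP)
    · have hcm : c ∈ Pe e := by rw [hc]; exact R.ep_mem he
      exact absurd hcm (Finset.disjoint_left.mp (R.disj_v_e v e he) hcP)
  · have hab' : s(a, b) ∈ H.edgeSet := H.mem_edgeSet.mpr hab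
    rcases hor with ⟨hc, -⟩ | ⟨-, hc⟩
    · have hcm : c ∈ Pve a s(a, b) := by
        rw [hc]; exact R.bp_mem hab' (Sym2.mem_mk_left a b)
      exact absurd hcm
        (Finset.disjoint_left.mp (R.disj_v_b v a s(a, b) hab' (Sym2.mem_mk_left a b)) hcP)
    · have hcm : c ∈ Pve b s(a, b) := by
        rw [hc]; exact R.bp_mem hab' (Sym2.mem_mk_right a b)
      exact absurd hcm
        (Finset.disjoint_left.mp (R.disj_v_b v b s(a, b) hab' (Sym2.mem_mk_right a b)) hcP)

lemma ext_Pe {e : Sym2 V} (he : e ∈ H.edgeSet) :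
    ∀ c ∈ Pe e, c ≠ ep e → ∀ y, G.Adj c y → y ∈ Pe e := by
  intro c hcP hct y hadj
  rcases R.adj_cases c y hadj with ⟨v', hx, hy⟩ | ⟨e', he', hx, hy⟩ | ⟨v', e', he', hve, hx, hy⟩
    | ⟨v', e', he', hve, hor⟩ | ⟨v', e', he', hve, hor⟩ | ⟨a, b, hab, hor⟩
  · exact absurd hcP (Finset.disjoint_left.mp (R.disj_v_e v' e he) hx)
  · by_cases hee : e' = e
    · exact hee ▸ hy
    · exact absurd hcP (Finset.disjoint_left.mp (R.disj_ee e' he' e he hee) hx)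
  · exact absurd hx (Finset.disjoint_left.mp (R.disj_e_b e he v' e' he' hve) hcP)
  · rcases hor with ⟨hc, -⟩ | ⟨-, hc⟩
    · have hcm : c ∈ Pve v' e' := by rw [hc]; exact R.bp_mem he' hve
      exact absurd hcm (Finset.disjoint_left.mp (R.disj_e_b e he v' e' he' hve) hcP)
    · have hcm : c ∈ Pv v' := by rw [hc]; exact R.vp_mem v'
      exact absurd hcP (Finset.disjoint_left.mp (R.disj_v_e v' e he) hcm)
  · rcases hor with ⟨hc, -⟩ | ⟨-, hc⟩
    · have hcm : c ∈ Pve v' e' := by rw [hc]; exact R.bp_mem he' hve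
      exact absurd hcm (Finset.disjoint_left.mp (R.disj_e_b e he v' e' he' hve) hcP)
    · have hcm : c ∈ Pe e' := by rw [hc]; exact R.ep_mem he'
      by_cases hee : e' = e
      · subst hee
        exact absurd hc hct
      · exact absurd hcP (Finset.disjoint_left.mp (R.disj_ee e' he' e he hee) hcm)
  · have hab' : s(a, b) ∈ H.edgeSet := H.mem_edgeSet.mpr hab
    rcases hor with ⟨hc, -⟩ | ⟨-, hc⟩
    · have hcm : c ∈ Pve a s(a, b) := by
        rw [hc]; exact R.bp_mem hab' (Sym2.mem_mk_left a b)
      exact absurd hcm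
        (Finset.disjoint_left.mp (R.disj_e_b e he a s(a, b) hab' (Sym2.mem_mk_left a b)) hcP)
    · have hcm : c ∈ Pve b s(a, b) := by
        rw [hc]; exact R.bp_mem hab' (Sym2.mem_mk_right a b)
      exact absurd hcm
        (Finset.disjoint_left.mp (R.disj_e_b e he b s(a, b) hab' (Sym2.mem_mk_right a b)) hcP)

lemma ext_Pve {v : V} {e : Sym2 V} (he : e ∈ H.edgeSet) (hve : v ∈ e) :
    ∀ c ∈ Pve v e, c ≠ bp v e → ∀ y, G.Adj c y → y ∈ Pve v e := by
  intro c hcP hct y hadj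
  rcases R.adj_cases c y hadj with ⟨v', hx, hy⟩ | ⟨e', he', hx, hy⟩ | ⟨v', e', he', hve', hx, hy⟩
    | ⟨v', e', he', hve', hor⟩ | ⟨v', e', he', hve', hor⟩ | ⟨a, b, hab, hor⟩
  · exact absurd hcP (Finset.disjoint_left.mp (R.disj_v_b v' v e he hve) hx)
  · exact absurd hcP (Finset.disjoint_left.mp (R.disj_e_b e' he' v e he hve) hx)
  · by_cases hvv : (v', e') = (v, e)
    · rw [Prod.mk.injEq] at hvv
      rw [← hvv.1, ← hvv.2]
      exact hy
    · exact absurd hcP (Finset.disjoint_left.mp (R.disj_bb v' e' he' hve' v e he hve hvv) hx)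
  · rcases hor with ⟨hc, -⟩ | ⟨-, hc⟩
    · have hcm : c ∈ Pve v' e' := by rw [hc]; exact R.bp_mem he' hve'
      by_cases hvv : (v', e') = (v, e)
      · rw [Prod.mk.injEq] at hvv
        rw [hvv.2, hvv.1] at hc
        exact absurd hc hct
      · exact absurd hcP (Finset.disjoint_left.mp (R.disj_bb v' e' he' hve' v e he hve hvv) hcm)
    · have hcm : c ∈ Pv v' := by rw [hc]; exact R.vp_mem v'
      exact absurd hcP (Finset.disjoint_left.mp (R.disj_v_b v' v e he hve) hcm)
  · rcases hor with ⟨hc, -⟩ | ⟨-, hc⟩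
    · have hcm : c ∈ Pve v' e' := by rw [hc]; exact R.bp_mem he' hve'
      by_cases hvv : (v', e') = (v, e)
      · rw [Prod.mk.injEq] at hvv
        rw [hvv.2, hvv.1] at hc
        exact absurd hc hct
      · exact absurd hcP (Finset.disjoint_left.mp (R.disj_bb v' e' he' hve' v e he hve hvv) hcm)
    · have hcm : c ∈ Pe e' := by rw [hc]; exact R.ep_mem he'
      exact absurd hcP (Finset.disjoint_left.mp (R.disj_e_b e' he' v e he hve) hcm)
  · have hab' : s(a, b) ∈ H.edgeSet := H.mem_edgeSet.mpr hab
    rcases hor with ⟨hc, -⟩ | ⟨-, hc⟩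
    · have hcm : c ∈ Pve a s(a, b) := by
        rw [hc]; exact R.bp_mem hab' (Sym2.mem_mk_left a b)
      by_cases hvv : (a, s(a, b)) = (v, e)
      · rw [Prod.mk.injEq] at hvv
        rw [hvv.2, hvv.1] at hc
        exact absurd hc hct
      · exact absurd hcP (Finset.disjoint_left.mp
          (R.disj_bb a s(a, b) hab' (Sym2.mem_mk_left a b) v e he hve hvv) hcm)
    · have hcm : c ∈ Pve b s(a, b) := by
        rw [hc]; exact R.bp_mem hab' (Sym2.mem_mk_right a b)
      by_cases hvv : (b, s(a, b)) = (v, e)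
      · rw [Prod.mk.injEq] at hvv
        rw [hvv.2, hvv.1] at hc
        exact absurd hc hct
      · exact absurd hcP (Finset.disjoint_left.mp
          (R.disj_bb b s(a, b) hab' (Sym2.mem_mk_right a b) v e he hve hvv) hcm)

end AvgALReduction

lemma sym2_filter_card_le {V : Type*} [Fintype V] [DecidableEq V] (e : Sym2 V) :
    (Finset.univ.filter (· ∈ e)).card ≤ 2 := by
  induction e using Sym2.ind with
  | _ a b =>
    have hsub : (Finset.univ.filter (· ∈ s(a, b))) ⊆ ({a, b} : Finset V) := by
      intro x hx
      have hx' : x ∈ s(a, b) := (Finset.mem_filter.mp hx).2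
      rw [Sym2.mem_iff] at hx'
      rcases hx' with rfl | rfl
      · exact Finset.mem_insert_self _ _
      · exact Finset.mem_insert_of_mem (Finset.mem_singleton_self _)
    refine le_trans (Finset.card_le_card hsub) ?_
    exact le_trans (Finset.card_insert_le _ _) (by simp)

end Instantiation

section Counting

set_option linter.unusedSectionVars false
set_option maxHeartbeats 1000000

variable {V N : Type*} [Fintype V] [DecidableEq V] [Fintype N] [DecidableEq N]
  {H : SimpleGraph V} {k : ℕ} {G : SimpleGraph N}
  {Pv : V → Finset N} {Pe : Sym2 V → Finset N} {Pve : V → Sym2 V → Finset N}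
  {vp : V → N} {ep : Sym2 V → N} {bp : V → Sym2 V → N}

namespace AvgALReduction

variable (R : AvgALReduction H k G Pv Pe Pve vp ep bp)

include R

lemma card_Pv (v : V) : (Pv v).card = avgK' k - 2 + 1 :=
  (R.pdome_v v).choose_spec.choose_spec.card_eq

lemma card_Pe {e : Sym2 V} (he : e ∈ H.edgeSet) : (Pe e).card = avgK' k - 2 + 1 :=
  (R.pdome_e e he).choose_spec.choose_spec.card_eq

lemma card_N_ge :
    (Fintype.card V + H.edgeFinset.card) * (avgK' k - 2 + 1) ≤ Fintype.card N := by
  classical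
  set s : Finset N := Finset.univ.biUnion Pv with hs
  set t : Finset N := H.edgeFinset.biUnion Pe with ht
  have hcs : s.card = Fintype.card V * (avgK' k - 2 + 1) := by
    rw [hs, Finset.card_biUnion (fun v _ w _ hvw => R.disj_vv v w hvw)]
    rw [Finset.sum_congr rfl (fun v _ => R.card_Pv v), Finset.sum_const, smul_eq_mul,
      Finset.card_univ]
  have hct : t.card = H.edgeFinset.card * (avgK' k - 2 + 1) := by
    rw [ht, Finset.card_biUnion (fun e he f hf hef =>
      R.disj_ee e (SimpleGraph.mem_edgeFinset.mp he) f (SimpleGraph.mem_edgeFinset.mp hf) hef)]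
    rw [Finset.sum_congr rfl (fun e he => R.card_Pe (SimpleGraph.mem_edgeFinset.mp he)),
      Finset.sum_const, smul_eq_mul]
  have hdisj : Disjoint s t := by
    rw [hs, ht]
    refine Finset.disjoint_left.mpr ?_
    intro x hx hx'
    rw [Finset.mem_biUnion] at hx hx'
    obtain ⟨v, -, hxv⟩ := hx
    obtain ⟨e, he, hxe⟩ := hx'
    exact Finset.disjoint_left.mp (R.disj_v_e v e (SimpleGraph.mem_edgeFinset.mp he)) hxv hxe
  have := Finset.card_union_of_disjoint hdisj
  have hle : (s ∪ t).card ≤ Fintype.card N := Finset.card_le_univ _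
  rw [this] at hle
  rw [hcs, hct] at hle
  linarith [Nat.add_mul (Fintype.card V) H.edgeFinset.card (avgK' k - 2 + 1)]

lemma top_nbhd_Pe {e : Sym2 V} (he : e ∈ H.edgeSet)
    {d' K' : ℕ} {m' : N} {fr' : Fin d' → N}
    (ge : IsPinchedDomeGadget G d' K' (Pe e) (ep e) m' fr') :
    ∀ y, G.Adj (ep e) y →
      y ∈ insert m' ((Finset.univ.filter (· ∈ e)).image (fun u => bp u e)) := by
  intro y hadj
  rcases R.adj_cases _ y hadj with ⟨v', hx, hy⟩ | ⟨e', he', hx, hy⟩ | ⟨v', e', he', hve', hx, hy⟩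
    | ⟨v', e', he', hve', hor⟩ | ⟨v', e', he', hve', hor⟩ | ⟨a, b, hab, hor⟩
  · exact absurd (R.ep_mem he) (Finset.disjoint_left.mp (R.disj_v_e v' e he) hx)
  · by_cases hee : e' = e
    · subst hee
      have := (ge.adj_top_in_P y hy).mp hadj
      rw [this]
      exact Finset.mem_insert_self _ _
    · exact absurd (R.ep_mem he) (Finset.disjoint_left.mp (R.disj_ee e' he' e he hee) hx)
  · exact absurd hx (Finset.disjoint_left.mp (R.disj_e_b e he v' e' he' hve') (R.ep_mem he))
  · rcases hor with ⟨hc, -⟩ | ⟨-, hc⟩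
    · have hcm : ep e ∈ Pve v' e' := by rw [hc]; exact R.bp_mem he' hve'
      exact absurd hcm (Finset.disjoint_left.mp (R.disj_e_b e he v' e' he' hve') (R.ep_mem he))
    · have hcm : ep e ∈ Pv v' := by rw [hc]; exact R.vp_mem v'
      exact absurd (R.ep_mem he) (Finset.disjoint_left.mp (R.disj_v_e v' e he) hcm)
  · rcases hor with ⟨hc, -⟩ | ⟨hy, hc⟩
    · have hcm : ep e ∈ Pve v' e' := by rw [hc]; exact R.bp_mem he' hve'
      exact absurd hcm (Finset.disjoint_left.mp (R.disj_e_b e he v' e' he' hve') (R.ep_mem he))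
    · have hcm : ep e ∈ Pe e' := by rw [hc]; exact R.ep_mem he'
      by_cases hee : e' = e
      · subst hee
        rw [hy]
        exact Finset.mem_insert_of_mem (Finset.mem_image.mpr
          ⟨v', Finset.mem_filter.mpr ⟨Finset.mem_univ _, hve'⟩, rfl⟩)
      · exact absurd (R.ep_mem he) (Finset.disjoint_left.mp (R.disj_ee e' he' e he hee) hcm)
  · have hab' : s(a, b) ∈ H.edgeSet := H.mem_edgeSet.mpr hab
    rcases hor with ⟨hc, -⟩ | ⟨-, hc⟩
    · have hcm : ep e ∈ Pve a s(a, b) := by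
        rw [hc]; exact R.bp_mem hab' (Sym2.mem_mk_left a b)
      exact absurd hcm (Finset.disjoint_left.mp
        (R.disj_e_b e he a s(a, b) hab' (Sym2.mem_mk_left a b)) (R.ep_mem he))
    · have hcm : ep e ∈ Pve b s(a, b) := by
        rw [hc]; exact R.bp_mem hab' (Sym2.mem_mk_right a b)
      exact absurd hcm (Finset.disjoint_left.mp
        (R.disj_e_b e he b s(a, b) hab' (Sym2.mem_mk_right a b)) (R.ep_mem he))

lemma top_nbhd_Pve {v : V} {e : Sym2 V} (he : e ∈ H.edgeSet) (hve : v ∈ e)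
    {d' K' : ℕ} {m' : N} {fr' : Fin d' → N}
    (ge : IsPinchedDomeGadget G d' K' (Pve v e) (bp v e) m' fr') :
    ∀ y, G.Adj (bp v e) y →
      y ∈ insert m' (insert (vp v) (insert (ep e)
        ((Finset.univ.filter (· ∈ e)).image (fun u => bp u e)))) := by
  intro y hadj
  have hbpm : bp v e ∈ Pve v e := R.bp_mem he hve
  rcases R.adj_cases _ y hadj with ⟨v', hx, hy⟩ | ⟨e', he', hx, hy⟩ | ⟨v', e', he', hve', hx, hy⟩
    | ⟨v', e', he', hve', hor⟩ | ⟨v', e', he', hve', hor⟩ | ⟨a, b, hab, hor⟩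
  · exact absurd hbpm (Finset.disjoint_left.mp (R.disj_v_b v' v e he hve) hx)
  · exact absurd hbpm (Finset.disjoint_left.mp (R.disj_e_b e' he' v e he hve) hx)
  · by_cases hvv : (v', e') = (v, e)
    · rw [Prod.mk.injEq] at hvv
      rw [hvv.1, hvv.2] at hy
      have := (ge.adj_top_in_P y hy).mp hadj
      rw [this]
      exact Finset.mem_insert_self _ _
    · exact absurd hbpm (Finset.disjoint_left.mp (R.disj_bb v' e' he' hve' v e he hve hvv) hx)
  · rcases hor with ⟨hc, hy⟩ | ⟨-, hc⟩
    · have hcm : bp v e ∈ Pve v' e' := by rw [hc]; exact R.bp_mem he' hve'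
      by_cases hvv : (v', e') = (v, e)
      · rw [Prod.mk.injEq] at hvv
        rw [hvv.1] at hy
        rw [hy]
        exact Finset.mem_insert_of_mem (Finset.mem_insert_self _ _)
      · exact absurd hbpm
          (Finset.disjoint_left.mp (R.disj_bb v' e' he' hve' v e he hve hvv) hcm)
    · have hcm : bp v e ∈ Pv v' := by rw [hc]; exact R.vp_mem v'
      exact absurd hbpm (Finset.disjoint_left.mp (R.disj_v_b v' v e he hve) hcm)
  · rcases hor with ⟨hc, hy⟩ | ⟨-, hc⟩
    · have hcm : bp v e ∈ Pve v' e' := by rw [hc]; exact R.bp_mem he' hve'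
      by_cases hvv : (v', e') = (v, e)
      · rw [Prod.mk.injEq] at hvv
        rw [hvv.2] at hy
        rw [hy]
        exact Finset.mem_insert_of_mem (Finset.mem_insert_of_mem (Finset.mem_insert_self _ _))
      · exact absurd hbpm
          (Finset.disjoint_left.mp (R.disj_bb v' e' he' hve' v e he hve hvv) hcm)
    · have hcm : bp v e ∈ Pe e' := by rw [hc]; exact R.ep_mem he'
      exact absurd hbpm (Finset.disjoint_left.mp (R.disj_e_b e' he' v e he hve) hcm)
  · have hab' : s(a, b) ∈ H.edgeSet := H.mem_edgeSet.mpr hab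
    rcases hor with ⟨hc, hy⟩ | ⟨hy, hc⟩
    · have hcm : bp v e ∈ Pve a s(a, b) := by
        rw [hc]; exact R.bp_mem hab' (Sym2.mem_mk_left a b)
      by_cases hvv : (a, s(a, b)) = (v, e)
      · rw [Prod.mk.injEq] at hvv
        have hbe : b ∈ e := by rw [← hvv.2]; exact Sym2.mem_mk_right a b
        rw [hvv.2] at hy
        rw [hy]
        exact Finset.mem_insert_of_mem (Finset.mem_insert_of_mem (Finset.mem_insert_of_mem
          (Finset.mem_image.mpr ⟨b, Finset.mem_filter.mpr ⟨Finset.mem_univ _, hbe⟩, rfl⟩)))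
      · exact absurd hbpm
          (Finset.disjoint_left.mp (R.disj_bb a s(a,b) hab' (Sym2.mem_mk_left a b) v e he hve hvv) hcm)
    · have hcm : bp v e ∈ Pve b s(a, b) := by
        rw [hc]; exact R.bp_mem hab' (Sym2.mem_mk_right a b)
      by_cases hvv : (b, s(a, b)) = (v, e)
      · rw [Prod.mk.injEq] at hvv
        have hae : a ∈ e := by rw [← hvv.2]; exact Sym2.mem_mk_left a b
        rw [hvv.2] at hy
        rw [hy]
        exact Finset.mem_insert_of_mem (Finset.mem_insert_of_mem (Finset.mem_insert_of_mem
          (Finset.mem_image.mpr ⟨a, Finset.mem_filter.mpr ⟨Finset.mem_univ _, hae⟩, rfl⟩)))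
      · exact absurd hbpm
          (Finset.disjoint_left.mp (R.disj_bb b s(a,b) hab' (Sym2.mem_mk_right a b) v e he hve hvv) hcm)

end AvgALReduction

lemma card_T_Pe {V N : Type*} [Fintype V] [DecidableEq V] [Fintype N] [DecidableEq N]
    (m' : N) (bp : V → Sym2 V → N) (e : Sym2 V) :
    (insert m' ((Finset.univ.filter (· ∈ e)).image (fun u => bp u e))).card ≤ 5 := by
  refine le_trans (Finset.card_insert_le _ _) ?_
  have h1 : ((Finset.univ.filter (· ∈ e)).image (fun u => bp u e)).card ≤ 2 :=
    le_trans (Finset.card_image_le) (sym2_filter_card_le e)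
  omega

lemma card_T_Pve {V N : Type*} [Fintype V] [DecidableEq V] [Fintype N] [DecidableEq N]
    (m' x y : N) (bp : V → Sym2 V → N) (e : Sym2 V) :
    (insert m' (insert x (insert y
      ((Finset.univ.filter (· ∈ e)).image (fun u => bp u e))))).card ≤ 5 := by
  refine le_trans (Finset.card_insert_le _ _) ?_
  have h2 := Finset.card_insert_le x (insert y ((Finset.univ.filter (· ∈ e)).image (fun u => bp u e)))
  have h3 := Finset.card_insert_le y ((Finset.univ.filter (· ∈ e)).image (fun u => bp u e))
  have h1 : ((Finset.univ.filter (· ∈ e)).image (fun u => bp u e)).card ≤ 2 :=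
    le_trans (Finset.card_image_le) (sym2_filter_card_le e)
  omega

end Counting


set_option maxHeartbeats 1000000

/-- In the avg-AL reduction instance, every member of a coalition `C` blocking `Γ`
is a vertex player, an edge player, an incidence player, or the mid player of a
vertex gadget (i.e. a neighbor of some `vp v` inside `Pv v`); in particular `C`
contains no base-clique players and no mid players of edge or incidence gadgets. -/
theorem avgAL_blocking_members {V N : Type*} [Fintype V] [DecidableEq V]
    [Fintype N] [DecidableEq N]
    (H : SimpleGraph V) (k : ℕ) (hk : 3 ≤ k)
    (hsize : k < Fintype.card V + H.edgeFinset.card) (hdvd : 3 ∣ (k + 1))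
    (G : SimpleGraph N) (Pv : V → Finset N) (Pe : Sym2 V → Finset N)
    (Pve : V → Sym2 V → Finset N)
    (vp : V → N) (ep : Sym2 V → N) (bp : V → Sym2 V → N)
    (R : AvgALReduction H k G Pv Pe Pve vp ep bp)
    (w : ℚ) (hw : (Fintype.card N : ℚ) ^ 4 ≤ w)
    (Γ : CoalitionStructure N) (hΓ : IsAvgGamma H Pv Pe Pve Γ)
    (C : Finset N) (hC : Blocks (utilAvgAL G w) Γ C) :
    ∀ i ∈ C, (∃ v : V, i = vp v) ∨ (∃ e ∈ H.edgeSet, i = ep e) ∨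
      (∃ (v : V), ∃ e ∈ H.edgeSet, v ∈ e ∧ i = bp v e) ∨
      (∃ v : V, i ∈ Pv v ∧ G.Adj (vp v) i) := by
  intro i hiC
  -- global numerics
  have hk5 : 5 ≤ k := by omega
  have hcr : Nat.choose k 2 = k * (k - 1) / 2 := Nat.choose_two_right k
  have h20 : 20 ≤ k * (k - 1) := by
    have h4 : 4 ≤ k - 1 := by omega
    calc 20 = 5 * 4 := by norm_num
      _ ≤ k * (k - 1) := Nat.mul_le_mul hk5 h4
  have hc10 : 10 ≤ Nat.choose k 2 := by omega
  have hK : avgK' k = k + 3 * Nat.choose k 2 + 1 := rfl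
  have hn0 := R.card_N_ge
  have hnN : 6 * (avgK' k - 2 + 1) ≤ Fintype.card N :=
    le_trans (Nat.mul_le_mul_right _ (by omega)) hn0
  have hd3 : 3 * ((k + 1) / 3) = k + 1 := Nat.mul_div_cancel' hdvd
  rcases R.cover i with ⟨v, hiPv⟩ | ⟨e, he, hiPe⟩ | ⟨v, e, he, hve, hiPve⟩
  · -- vertex gadget
    obtain ⟨m', fr', gv⟩ := R.pdome_v v
    have hsub : ({vp v, m'} : Finset N) ⊆ Pv v := by
      intro x hx
      rcases Finset.mem_insert.mp hx with rfl | hx'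
      · exact gv.top_mem
      · rw [Finset.mem_singleton.mp hx']; exact gv.mid_mem
    have hbase2 : (pdomeBase (Pv v) (vp v) m').card + ({vp v, m'} : Finset N).card
        = (Pv v).card := Finset.card_sdiff_add_card_eq_card hsub
    have htm2 : ({vp v, m'} : Finset N).card = 2 := gv.card_topmid
    have hcard := gv.card_eq
    have hnobase := gv.no_base hC (hΓ.1 v) (R.ext_Pv v)
      (by norm_num) (by omega) (by omega) (by omega) hw
    have hiB : i ∉ pdomeBase (Pv v) (vp v) m' := fun h => hnobase i h hiC
    have hior : i = vp v ∨ i = m' := by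
      by_contra hcon
      push_neg at hcon
      exact hiB (mem_pdomeBase.mpr ⟨hiPv, hcon.1, hcon.2⟩)
    rcases hior with rfl | rfl
    · exact Or.inl ⟨v, rfl⟩
    · refine Or.inr (Or.inr (Or.inr ⟨v, hiPv, ?_⟩))
      exact (gv.adj_iff (vp v) gv.top_mem i gv.mid_mem).mpr (Or.inl ⟨rfl, rfl⟩)
  · -- edge gadget
    obtain ⟨m', fr', ge'⟩ := R.pdome_e e he
    have hsub : ({ep e, m'} : Finset N) ⊆ Pe e := by
      intro x hx
      rcases Finset.mem_insert.mp hx with rfl | hx'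
      · exact ge'.top_mem
      · rw [Finset.mem_singleton.mp hx']; exact ge'.mid_mem
    have hbase2 : (pdomeBase (Pe e) (ep e) m').card + ({ep e, m'} : Finset N).card
        = (Pe e).card := Finset.card_sdiff_add_card_eq_card hsub
    have htm2 : ({ep e, m'} : Finset N).card = 2 := ge'.card_topmid
    have hcard := ge'.card_eq
    have hnobase := ge'.no_base hC (hΓ.2.1 e he) (R.ext_Pe he)
      (by norm_num) (by omega) (by omega) (by omega) hw
    have hnomid := ge'.no_mid hC (hΓ.2.1 e he) (R.ext_Pe he)
      (by norm_num) (by omega) (by omega) (by omega) hw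
      (insert m' ((Finset.univ.filter (· ∈ e)).image (fun u => bp u e)))
      (R.top_nbhd_Pe he ge') (card_T_Pe m' bp e)
    have hiB : i ∉ pdomeBase (Pe e) (ep e) m' := fun h => hnobase i h hiC
    have hior : i = ep e ∨ i = m' := by
      by_contra hcon
      push_neg at hcon
      exact hiB (mem_pdomeBase.mpr ⟨hiPe, hcon.1, hcon.2⟩)
    rcases hior with rfl | rfl
    · exact Or.inr (Or.inl ⟨e, he, rfl⟩)
    · exact absurd hiC hnomid
  · -- incidence gadget
    obtain ⟨m', fr', gb⟩ := R.pdome_ve v e he hve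
    have hsub : ({bp v e, m'} : Finset N) ⊆ Pve v e := by
      intro x hx
      rcases Finset.mem_insert.mp hx with rfl | hx'
      · exact gb.top_mem
      · rw [Finset.mem_singleton.mp hx']; exact gb.mid_mem
    have hbase2 : (pdomeBase (Pve v e) (bp v e) m').card + ({bp v e, m'} : Finset N).card
        = (Pve v e).card := Finset.card_sdiff_add_card_eq_card hsub
    have htm2 : ({bp v e, m'} : Finset N).card = 2 := gb.card_topmid
    have hcard := gb.card_eq
    have hnobase := gb.no_base hC (hΓ.2.2 v e he hve) (R.ext_Pve he hve)
      (by omega) (by omega) (by omega) (by omega) hw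
    have hnomid := gb.no_mid hC (hΓ.2.2 v e he hve) (R.ext_Pve he hve)
      (by omega) (by omega) (by omega) (by omega) hw
      (insert m' (insert (vp v) (insert (ep e)
        ((Finset.univ.filter (· ∈ e)).image (fun u => bp u e)))))
      (R.top_nbhd_Pve he hve gb) (card_T_Pve m' (vp v) (ep e) bp e)
    have hiB : i ∉ pdomeBase (Pve v e) (bp v e) m' := fun h => hnobase i h hiC
    have hior : i = bp v e ∨ i = m' := by
      by_contra hcon
      push_neg at hcon
      exact hiB (mem_pdomeBase.mpr ⟨hiPve, hcon.1, hcon.2⟩)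
    rcases hior with rfl | rfl
    · exact Or.inr (Or.inr (Or.inl ⟨v, e, he, hve, rfl⟩))
    · exact absurd hiC hnomid
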